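/- arXiv:1101.1923 — 7 statements merged into one kernel-verified Lean document; each statement's English description precedes it below -/
import Mathlib

section
/- For any complex n×n matrix A and any positive integer d, A^d = (1/(d+1)) · Σ_{j=0}^{d} e^{πijd/(d+1)} · (e^{-πij/(d+1)} A + e^{πij/(d+1)} A*)^d, expressing A^d as a linear combination of d-th powers of Hermitian matrices. -/
open Complex Finset Matrix

private lemma entry_pow_natDegree {n : ℕ} (M : Matrix (Fin n) (Fin n) (Polynomial ℂ))
    (h : ∀ i k, (M i k).natDegree ≤ 1) :
    ∀ d i k, ((M ^ d) i k).natDegree ≤ d := by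
  intro d
  induction d with
  | zero =>
    intro i k
    simp only [pow_zero, Matrix.one_apply]
    split_ifs <;> simp
  | succ d ih =>
    intro i k
    rw [pow_succ, Matrix.mul_apply]
    apply Polynomial.natDegree_sum_le_of_forall_le
    intro l _
    exact Polynomial.natDegree_mul_le.trans (add_le_add (ih i l) (h l k))

private lemma eval_sum_roots (d : ℕ) (ζ : ℂ) (hζ : IsPrimitiveRoot ζ (d + 1))
    (p : Polynomial ℂ) (hp : p.natDegree ≤ d) :
    ∑ j ∈ Finset.range (d + 1), p.eval (ζ ^ j) = ((d : ℂ) + 1) * p.coeff 0 := by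
  have hev : ∀ z : ℂ, p.eval z = ∑ m ∈ Finset.range (d + 1), p.coeff m * z ^ m :=
    fun z => Polynomial.eval_eq_sum_range' (Nat.lt_succ_of_le hp) z
  simp_rw [hev]
  rw [Finset.sum_comm]
  have key : ∀ m ∈ Finset.range (d + 1),
      (∑ j ∈ Finset.range (d + 1), p.coeff m * (ζ ^ j) ^ m)
        = if m = 0 then ((d : ℂ) + 1) * p.coeff 0 else 0 := by
    intro m hm
    rw [← Finset.mul_sum]
    by_cases h0 : m = 0
    · subst h0
      simp only [pow_zero, Finset.sum_const, Finset.card_range, nsmul_eq_mul, mul_one, if_true]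
      push_cast
      ring
    · have hne : ζ ^ m ≠ 1 :=
        hζ.pow_ne_one_of_pos_of_lt h0 (Finset.mem_range.mp hm)
      have hpow : ∀ j, (ζ ^ j) ^ m = (ζ ^ m) ^ j := fun j => by
        rw [← pow_mul, mul_comm, pow_mul]
      simp_rw [hpow]
      rw [geom_sum_eq hne]
      have h1 : (ζ ^ m) ^ (d + 1) = 1 := by
        rw [← pow_mul, mul_comm, pow_mul, hζ.pow_eq_one, one_pow]
      simp [h0, h1]
  rw [Finset.sum_congr rfl key]
  simp

private lemma key_sum {n : ℕ} (d : ℕ) (ζ : ℂ) (hζ : IsPrimitiveRoot ζ (d + 1))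
    (A B : Matrix (Fin n) (Fin n) ℂ) :
    ∑ j ∈ Finset.range (d + 1), (A + ζ ^ j • B) ^ d = ((d : ℂ) + 1) • A ^ d := by
  classical
  set M : Matrix (Fin n) (Fin n) (Polynomial ℂ) :=
    A.map Polynomial.C + (Polynomial.X : Polynomial ℂ) • B.map Polynomial.C with hM
  have hdeg1 : ∀ i k, (M i k).natDegree ≤ 1 := by
    intro i k
    simp only [hM, Matrix.add_apply, Matrix.smul_apply, Matrix.map_apply, smul_eq_mul]
    refine Polynomial.natDegree_add_le_of_degree_le (by simp) ?_
    refine Polynomial.natDegree_mul_le.trans ?_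
    simp
  have hdeg : ∀ i k, ((M ^ d) i k).natDegree ≤ d := entry_pow_natDegree M hdeg1 d
  have heval : ∀ z : ℂ, (M ^ d).map (Polynomial.eval z) = (A + z • B) ^ d := by
    intro z
    have h1 : M.map (Polynomial.eval z) = A + z • B := by
      ext i k
      simp only [hM, Matrix.map_apply, Matrix.add_apply, Matrix.smul_apply, smul_eq_mul,
        Polynomial.eval_add, Polynomial.eval_mul, Polynomial.eval_C, Polynomial.eval_X]
    calc (M ^ d).map (Polynomial.eval z)
        = (Polynomial.evalRingHom z).mapMatrix (M ^ d) := rfl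
      _ = ((Polynomial.evalRingHom z).mapMatrix M) ^ d := map_pow _ _ _
      _ = (A + z • B) ^ d := by
          rw [RingHom.mapMatrix_apply]
          exact congrArg (· ^ d) h1
  ext i k
  simp only [Matrix.sum_apply, Matrix.smul_apply]
  have h2 : ∀ j, ((A + ζ ^ j • B) ^ d) i k = Polynomial.eval (ζ ^ j) ((M ^ d) i k) := by
    intro j
    rw [← heval (ζ ^ j)]
    rfl
  calc ∑ j ∈ Finset.range (d + 1), ((A + ζ ^ j • B) ^ d) i k
      = ∑ j ∈ Finset.range (d + 1), Polynomial.eval (ζ ^ j) ((M ^ d) i k) := by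
        exact Finset.sum_congr rfl fun j _ => h2 j
    _ = ((d : ℂ) + 1) * ((M ^ d) i k).coeff 0 := eval_sum_roots d ζ hζ _ (hdeg i k)
    _ = ((d : ℂ) + 1) * Polynomial.eval 0 ((M ^ d) i k) := by
        rw [Polynomial.coeff_zero_eq_eval_zero]
    _ = ((d : ℂ) + 1) * ((A + (0 : ℂ) • B) ^ d) i k := by
        rw [← heval 0]; rfl
    _ = ((d : ℂ) + 1) • (A ^ d) i k := by
        rw [zero_smul, add_zero, smul_eq_mul]

theorem polarization_hermitian (n d : ℕ) (hd : 1 ≤ d)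
    (A : Matrix (Fin n) (Fin n) ℂ) :
    A ^ d = ((d + 1 : ℂ))⁻¹ •
      ∑ j ∈ Finset.range (d + 1),
        Complex.exp (Real.pi * Complex.I * j * d / (d + 1)) •
          (Complex.exp (-(Real.pi * Complex.I * j / (d + 1))) • A +
           Complex.exp (Real.pi * Complex.I * j / (d + 1)) • Aᴴ) ^ d := by
  set ζ : ℂ := Complex.exp (2 * Real.pi * Complex.I / ((d : ℂ) + 1)) with hζdef
  have hζ : IsPrimitiveRoot ζ (d + 1) := by
    have h := Complex.isPrimitiveRoot_exp (d + 1) (Nat.succ_ne_zero d)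
    rwa [Nat.cast_add, Nat.cast_one] at h
  have hterm : ∀ j ∈ Finset.range (d + 1),
      Complex.exp (Real.pi * Complex.I * j * d / (d + 1)) •
          (Complex.exp (-(Real.pi * Complex.I * j / (d + 1))) • A +
           Complex.exp (Real.pi * Complex.I * j / (d + 1)) • Aᴴ) ^ d
        = (A + ζ ^ j • Aᴴ) ^ d := by
    intro j _
    have h1 : Complex.exp (Real.pi * Complex.I * j * d / (d + 1))
        = Complex.exp (Real.pi * Complex.I * j / (d + 1)) ^ d := by
      rw [← Complex.exp_nat_mul]
      congr 1
      ring
    rw [h1, ← smul_pow]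
    congr 1
    rw [smul_add, smul_smul, smul_smul, ← Complex.exp_add, ← Complex.exp_add]
    have h2 : Complex.exp (Real.pi * Complex.I * j / (d + 1) +
        -(Real.pi * Complex.I * j / (d + 1))) = 1 := by
      rw [add_neg_cancel, Complex.exp_zero]
    have h3 : Complex.exp (Real.pi * Complex.I * j / (d + 1) +
        Real.pi * Complex.I * j / (d + 1)) = ζ ^ j := by
      rw [hζdef, ← Complex.exp_nat_mul]
      congr 1
      ring
    rw [h2, h3, one_smul]
  rw [Finset.sum_congr rfl hterm, key_sum d ζ hζ A Aᴴ]
  have hne : ((d : ℂ) + 1) ≠ 0 := by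
    have := Nat.cast_add_one_ne_zero (R := ℂ) d
    push_cast at this ⊢
    exact this
  rw [inv_smul_smul₀ hne]
end

section
/- Let V be a finite-dimensional normed space, K ⊆ V an open convex set, and F : K → ℝ a convex L-Lipschitz function. Then the function F̃ : V → ℝ defined by F̃(x) = sup { F(y) + φ(x−y) : y ∈ K, φ ∈ ∂F(y) } is a convex L-Lipschitz extension of F which is pointwise minimal among all convex extensions of F. -/
open Set

/-- Any subgradient of an `L`-Lipschitz function on an open set has norm at most `L`. -/
lemma subgrad_norm_le {V : Type*} [NormedAddCommGroup V] [NormedSpace ℝ V]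
    (K : Set V) (hK : IsOpen K) (F : V → ℝ) (L : NNReal)
    (hFlip : LipschitzOnWith L F K) {y : V} (hy : y ∈ K) (φ : V →L[ℝ] ℝ)
    (hφ : ∀ z ∈ K, F y + φ (z - y) ≤ F z) : ‖φ‖ ≤ L := by
  obtain ⟨ε, hε, hball⟩ := Metric.isOpen_iff.1 hK y hy
  refine φ.opNorm_le_bound (by positivity) (fun v => ?_)
  rcases eq_or_ne v 0 with rfl | hv
  · simp
  have hvn : (0:ℝ) < ‖v‖ := norm_pos_iff.2 hv
  set t : ℝ := ε / (2 * ‖v‖) with ht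
  have htpos : 0 < t := by positivity
  set w : V := t • v with hw
  have hwn : ‖w‖ = t * ‖v‖ := by rw [hw, norm_smul, Real.norm_eq_abs, abs_of_pos htpos]
  have hwε : ‖w‖ < ε := by
    rw [hwn, ht]; rw [div_mul_eq_mul_div, mul_comm]
    calc ‖v‖ * ε / (2 * ‖v‖) = ε / 2 := by field_simp
    _ < ε := by linarith
  have hsub : ∀ u : V, ‖u‖ < ε → φ u ≤ L * ‖u‖ := by
    intro u hu
    have hmem : y + u ∈ K := hball (by simpa [dist_eq_norm] using hu)
    have h1 : F y + φ u ≤ F (y + u) := by simpa using hφ (y + u) hmem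
    have h2 : |F (y + u) - F y| ≤ L * ‖u‖ := by
      have := hFlip.dist_le_mul (y + u) hmem y hy
      simpa [Real.dist_eq, dist_eq_norm] using this
    have := abs_le.1 h2
    linarith [this.2]
  have h1 : φ w ≤ L * ‖w‖ := hsub w hwε
  have h2 : φ (-w) ≤ L * ‖-w‖ := hsub (-w) (by rwa [norm_neg])
  rw [map_neg, norm_neg] at h2
  have habs : |φ w| ≤ L * ‖w‖ := abs_le.2 ⟨by linarith, h1⟩
  have hφw : φ w = t * φ v := by rw [hw, map_smul]; simp
  rw [hφw, hwn, abs_mul, abs_of_pos htpos, ← mul_assoc, mul_comm (L:ℝ) t, mul_assoc] at habs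
  have := (mul_le_mul_iff_right₀ htpos).1 habs
  simpa [Real.norm_eq_abs] using this

/-- Existence of subgradients for a convex Lipschitz function on an open convex set. -/
lemma exists_subgrad {V : Type*} [NormedAddCommGroup V] [NormedSpace ℝ V]
    (K : Set V) (hK : IsOpen K) (hKc : Convex ℝ K) (F : V → ℝ) (L : NNReal)
    (hFconv : ConvexOn ℝ K F) (hFlip : LipschitzOnWith L F K) {y : V} (hy : y ∈ K) :
    ∃ φ : V →L[ℝ] ℝ, ∀ z ∈ K, F y + φ (z - y) ≤ F z := by
  classical
  set S : Set (V × ℝ) := {p | p.1 ∈ K ∧ F p.1 < p.2} with hS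
  have hSconv : Convex ℝ S := by
    rintro p ⟨hp1, hp2⟩ q ⟨hq1, hq2⟩ a b ha hb hab
    refine ⟨hKc hp1 hq1 ha hb hab, ?_⟩
    have hle : F (a • p.1 + b • q.1) ≤ a * F p.1 + b * F q.1 :=
      hFconv.2 hp1 hq1 ha hb hab
    have hlt : a * F p.1 + b * F q.1 < a * p.2 + b * q.2 := by
      rcases ha.eq_or_lt with rfl | ha'
      · have hb1 : b = 1 := by linarith
        simpa [hb1] using hq2
      · rcases hb.eq_or_lt with rfl | hb'
        · have ha1 : a = 1 := by linarith
          simpa [ha1] using hp2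
        · exact add_lt_add (by nlinarith) (by nlinarith)
    have : (a • p + b • q).1 = a • p.1 + b • q.1 := rfl
    calc F (a • p + b • q).1 = F (a • p.1 + b • q.1) := by rw [this]
      _ ≤ a * F p.1 + b * F q.1 := hle
      _ < a * p.2 + b * q.2 := hlt
      _ = (a • p + b • q).2 := rfl
  have hSopen : IsOpen S := by
    have hco : ContinuousOn (fun p : V × ℝ => p.2 - F p.1) (K ×ˢ (univ : Set ℝ)) := by
      apply ContinuousOn.sub continuous_snd.continuousOn
      exact hFlip.continuousOn.comp continuous_fst.continuousOn (fun p hp => hp.1)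
    have := hco.isOpen_inter_preimage (hK.prod isOpen_univ) (isOpen_Ioi (a := (0:ℝ)))
    convert this using 1
    ext p
    simp [hS, sub_pos, and_comm]
  have hnot : (y, F y) ∉ S := by simp [hS]
  obtain ⟨f, hf⟩ := geometric_hahn_banach_point_open hSconv hSopen hnot
  set c : ℝ := f (0, 1) with hc
  have hsplit : ∀ (z : V) (t : ℝ), f (z, t) = f (z, 0) + t * c := by
    intro z t
    have : (z, t) = (z, (0:ℝ)) + t • ((0:V), (1:ℝ)) := by simp [Prod.ext_iff]
    rw [this, map_add, map_smul, smul_eq_mul, hc]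
  have hcpos : 0 < c := by
    have h1 : ((y, F y + 1) : V × ℝ) ∈ S := ⟨hy, by simp⟩
    have := hf _ h1
    rw [hsplit y (F y + 1), hsplit y (F y)] at this
    linarith
  have hkey : ∀ z ∈ K, f (y, 0) + F y * c ≤ f (z, 0) + F z * c := by
    intro z hz
    by_contra h
    push_neg at h
    set ε : ℝ := ((f (y, 0) + F y * c) - (f (z, 0) + F z * c)) / c with hε
    have hεpos : 0 < ε := by apply div_pos; linarith; exact hcpos
    have hmem : ((z, F z + ε) : V × ℝ) ∈ S := ⟨hz, show F z < F z + ε by linarith⟩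
    have := hf _ hmem
    rw [hsplit z (F z + ε), hsplit y (F y)] at this
    have hεc : ε * c = (f (y, 0) + F y * c) - (f (z, 0) + F z * c) := by
      rw [hε, div_mul_cancel₀]; exact ne_of_gt hcpos
    nlinarith
  refine ⟨(-(c⁻¹)) • (f.comp (ContinuousLinearMap.inl ℝ V ℝ)), fun z hz => ?_⟩
  have happ : ((-(c⁻¹)) • (f.comp (ContinuousLinearMap.inl ℝ V ℝ))) (z - y)
      = -(c⁻¹) * (f (z, 0) - f (y, 0)) := by
    have : ((z - y : V), (0:ℝ)) = (z, 0) - (y, 0) := by simp [Prod.ext_iff]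
    rw [ContinuousLinearMap.smul_apply, ContinuousLinearMap.comp_apply,
      show (ContinuousLinearMap.inl ℝ V ℝ) (z - y) = ((z - y : V), (0:ℝ)) from rfl,
      this, map_sub, smul_eq_mul]
    try ring
  rw [happ]
  have := hkey z hz
  have hdiv : F y - F z ≤ (f (z, 0) - f (y, 0)) / c := by
    rw [le_div_iff₀ hcpos]; nlinarith
  have : -(c⁻¹) * (f (z, 0) - f (y, 0)) = -((f (z, 0) - f (y, 0)) / c) := by ring
  rw [this]
  linarith
noncomputable def minConvExt {V : Type*} [NormedAddCommGroup V] [NormedSpace ℝ V]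
    (K : Set V) (F : V → ℝ) (x : V) : ℝ :=
  sSup {r : ℝ | ∃ y ∈ K, ∃ φ : V →L[ℝ] ℝ,
    (∀ z ∈ K, F y + φ (z - y) ≤ F z) ∧ r = F y + φ (x - y)}

theorem convex_lipschitz_extension {V : Type*} [NormedAddCommGroup V] [NormedSpace ℝ V]
    [FiniteDimensional ℝ V] (K : Set V) (hK : IsOpen K) (hKc : Convex ℝ K)
    (hKne : K.Nonempty) (F : V → ℝ) (L : NNReal)
    (hFconv : ConvexOn ℝ K F) (hFlip : LipschitzOnWith L F K) :
    ConvexOn ℝ Set.univ (minConvExt K F) ∧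
    (∀ x ∈ K, minConvExt K F x = F x) ∧
    LipschitzWith L (minConvExt K F) ∧
    (∀ G : V → ℝ, ConvexOn ℝ Set.univ G → (∀ x ∈ K, G x = F x) →
      ∀ x, minConvExt K F x ≤ G x) := by
  classical
  set S : V → Set ℝ := fun x => {r : ℝ | ∃ y ∈ K, ∃ φ : V →L[ℝ] ℝ,
    (∀ z ∈ K, F y + φ (z - y) ≤ F z) ∧ r = F y + φ (x - y)} with hSdef
  have hval : ∀ x, minConvExt K F x = sSup (S x) := fun x => rfl
  obtain ⟨y₀, hy₀⟩ := hKne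
  obtain ⟨φ₀, hφ₀⟩ := exists_subgrad K hK hKc F L hFconv hFlip hy₀
  have hne : ∀ x, (S x).Nonempty := fun x => ⟨F y₀ + φ₀ (x - y₀), y₀, hy₀, φ₀, hφ₀, rfl⟩
  have hub : ∀ x, ∀ r ∈ S x, r ≤ F y₀ + L * ‖x - y₀‖ := by
    rintro x r ⟨y, hy, φ, hφ, rfl⟩
    have h1 : F y + φ (y₀ - y) ≤ F y₀ := hφ y₀ hy₀
    have hnφ : ‖φ‖ ≤ L := subgrad_norm_le K hK F L hFlip hy φ hφ
    have hsplit : φ (x - y) = φ (y₀ - y) + φ (x - y₀) := by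
      rw [← map_add]; congr 1; abel
    have h2 : φ (x - y₀) ≤ L * ‖x - y₀‖ := by
      calc φ (x - y₀) ≤ |φ (x - y₀)| := le_abs_self _
        _ ≤ ‖φ‖ * ‖x - y₀‖ := φ.le_opNorm _
        _ ≤ L * ‖x - y₀‖ := mul_le_mul_of_nonneg_right hnφ (norm_nonneg _)
    rw [hsplit]; linarith
  have hbdd : ∀ x, BddAbove (S x) := fun x => ⟨F y₀ + L * ‖x - y₀‖, fun r hr => hub x r hr⟩
  have hext : ∀ x ∈ K, minConvExt K F x = F x := by
    intro x hx
    rw [hval]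
    apply le_antisymm
    · apply csSup_le (hne x)
      rintro r ⟨y, hy, φ, hφ, rfl⟩
      exact hφ x hx
    · obtain ⟨φ, hφ⟩ := exists_subgrad K hK hKc F L hFconv hFlip hx
      exact le_csSup (hbdd x) ⟨x, hx, φ, hφ, by simp⟩
  refine ⟨?_, hext, ?_, ?_⟩
  · -- convexity
    refine ⟨convex_univ, fun x _ x' _ a b ha hb hab => ?_⟩
    simp only [smul_eq_mul, hval]
    apply csSup_le (hne _)
    rintro r ⟨y, hy, φ, hφ, rfl⟩
    have hcomb : a • x + b • x' - y = a • (x - y) + b • (x' - y) := by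
      have hb' : b = 1 - a := by linarith
      subst hb'
      module
    have hφc : φ (a • x + b • x' - y) = a * φ (x - y) + b * φ (x' - y) := by
      rw [hcomb, map_add, map_smul, map_smul]; simp
    have m1 : F y + φ (x - y) ≤ sSup (S x) := le_csSup (hbdd x) ⟨y, hy, φ, hφ, rfl⟩
    have m2 : F y + φ (x' - y) ≤ sSup (S x') := le_csSup (hbdd x') ⟨y, hy, φ, hφ, rfl⟩
    have : F y + φ (a • x + b • x' - y)
        = a * (F y + φ (x - y)) + b * (F y + φ (x' - y)) := by
      have hF : a * F y + b * F y = F y := by rw [← add_mul, hab, one_mul]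
      rw [hφc]; linarith
    rw [this]
    exact add_le_add (mul_le_mul_of_nonneg_left m1 ha) (mul_le_mul_of_nonneg_left m2 hb)
  · -- Lipschitz
    apply LipschitzWith.of_le_add_mul
    intro x x'
    rw [hval, hval]
    apply csSup_le (hne x)
    rintro r ⟨y, hy, φ, hφ, rfl⟩
    have hnφ : ‖φ‖ ≤ L := subgrad_norm_le K hK F L hFlip hy φ hφ
    have hsplit : φ (x - y) = φ (x' - y) + φ (x - x') := by
      rw [← map_add]; congr 1; abel
    have m1 : F y + φ (x' - y) ≤ sSup (S x') := le_csSup (hbdd x') ⟨y, hy, φ, hφ, rfl⟩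
    have h2 : φ (x - x') ≤ L * dist x x' := by
      rw [dist_eq_norm]
      calc φ (x - x') ≤ |φ (x - x')| := le_abs_self _
        _ ≤ ‖φ‖ * ‖x - x'‖ := φ.le_opNorm _
        _ ≤ L * ‖x - x'‖ := mul_le_mul_of_nonneg_right hnφ (norm_nonneg _)
    rw [hsplit]; linarith
  · -- minimality
    intro G hG hGF x
    rw [hval]
    apply csSup_le (hne x)
    rintro r ⟨y, hy, φ, hφ, rfl⟩
    obtain ⟨ε, hε, hball⟩ := Metric.isOpen_iff.1 hK y hy
    rcases eq_or_ne x y with rfl | hxy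
    · simp only [sub_self, map_zero, add_zero]
      rw [← hGF x hy]
    · have hxyn : (0:ℝ) < ‖x - y‖ := by
        rw [norm_pos_iff, sub_ne_zero]; exact hxy
      set t : ℝ := min (ε / (2 * ‖x - y‖)) (1/2) with ht
      have htpos : 0 < t := lt_min (by positivity) (by norm_num)
      have ht1 : t < 1 := lt_of_le_of_lt (min_le_right _ _) (by norm_num)
      set z : V := y + t • (x - y) with hz
      have hzK : z ∈ K := by
        apply hball
        rw [Metric.mem_ball, dist_eq_norm, hz]
        have : y + t • (x - y) - y = t • (x - y) := by abel
        rw [this, norm_smul, Real.norm_eq_abs, abs_of_pos htpos]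
        calc t * ‖x - y‖ ≤ (ε / (2 * ‖x - y‖)) * ‖x - y‖ :=
              mul_le_mul_of_nonneg_right (min_le_left _ _) (norm_nonneg _)
          _ = ε / 2 := by field_simp
          _ < ε := by linarith
      have hsub : F y + t * φ (x - y) ≤ F z := by
        have := hφ z hzK
        have h0 : z - y = t • (x - y) := by rw [hz]; abel
        rwa [h0, map_smul, smul_eq_mul] at this
      have hzcomb : z = (1 - t) • y + t • x := by rw [hz]; module
      have hGz : G z ≤ (1 - t) * G y + t * G x := by
        have := hG.2 (mem_univ y) (mem_univ x) (by linarith : (0:ℝ) ≤ 1 - t)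
          (le_of_lt htpos) (by ring)
        rw [← hzcomb] at this
        simpa using this
      rw [hGF z hzK, hGF y hy] at hGz
      have hfin : t * φ (x - y) ≤ t * (G x - F y) := by linarith
      have := (mul_le_mul_iff_right₀ htpos).1 hfin
      linarith
end

section
/- If K_a, a > 0, is a nested increasing family of open convex subsets of a finite-dimensional normed space V whose union is V, and F : V → ℝ is convex and Lipschitz on each K_a, then the minimal convex extensions F_a of F|_{K_a} satisfy: for every x ∈ V, F_a(x) is nondecreasing in a and F_a(x) → F(x) as a → ∞. -/
open Set Filter

/-- Existence of a global subgradient for a convex function on a finite-dimensional space. -/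
lemma exists_global_subgrad {V : Type*} [NormedAddCommGroup V] [NormedSpace ℝ V]
    [FiniteDimensional ℝ V] (F : V → ℝ) (hF : ConvexOn ℝ Set.univ F) (y : V) :
    ∃ φ : V →L[ℝ] ℝ, ∀ z, F y + φ (z - y) ≤ F z := by
  have hcont : Continuous F := by
    have h := hF.continuousOn (C := (Set.univ : Set V)) isOpen_univ
    rwa [continuousOn_univ] at h
  set S : Set (V × ℝ) := {p | F p.1 < p.2} with hS
  have hSopen : IsOpen S := isOpen_lt (hcont.comp continuous_fst) continuous_snd
  have hSconv : Convex ℝ S := by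
    rintro ⟨p1, p2⟩ hp ⟨q1, q2⟩ hq a b ha hb hab
    simp only [hS, Set.mem_setOf_eq] at hp hq ⊢
    rcases ha.eq_or_lt with rfl | ha'
    · simpa [show b = 1 by linarith] using hq
    rcases hb.eq_or_lt with rfl | hb'
    · simpa [show a = 1 by linarith] using hp
    calc F (a • p1 + b • q1) ≤ a * F p1 + b * F q1 :=
          hF.2 (Set.mem_univ _) (Set.mem_univ _) ha hb hab
      _ < a * p2 + b * q2 := by
          exact add_lt_add (mul_lt_mul_of_pos_left hp ha') (mul_lt_mul_of_pos_left hq hb')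
  have hynS : (y, F y) ∉ S := by simp [hS]
  obtain ⟨f, hf⟩ := geometric_hahn_banach_open_point hSconv hSopen hynS
  set s : ℝ := f (0, 1) with hs
  have hsplit : ∀ z : V, ∀ t : ℝ, f (z, t) = f (z, 0) + t * s := by
    intro z t
    have : (z, t) = (z, (0:ℝ)) + t • ((0:V), (1:ℝ)) := by
      simp [Prod.ext_iff]
    rw [this, map_add, map_smul, smul_eq_mul, hs]
  have hsneg : s < 0 := by
    have h1 := hf (y, F y + 1) (by simp [hS])
    rw [hsplit] at h1
    have h2 : f (y, F y) = f (y, 0) + F y * s := hsplit y (F y)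
    nlinarith
  have key : ∀ z : V, f (z, 0) + F z * s ≤ f (y, 0) + F y * s := by
    intro z
    have h2 : f (y, F y) = f (y, 0) + F y * s := hsplit y (F y)
    have hε : ∀ ε > 0, f (z, 0) + F z * s ≤ f (y, 0) + F y * s + ε := by
      intro ε hε
      have hns : (0:ℝ) < -s := by linarith
      have h1 := hf (z, F z + ε / (-s)) (by
        simp only [hS, Set.mem_setOf_eq]
        have : 0 < ε / (-s) := div_pos hε hns
        linarith)
      rw [hsplit] at h1
      have hs0 : s ≠ 0 := by linarith
      have hdiv : ε / (-s) * s = -ε := by field_simp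
      nlinarith
    exact le_of_forall_pos_le_add hε
  refine ⟨(-s)⁻¹ • (f.comp (ContinuousLinearMap.inl ℝ V ℝ)), fun z => ?_⟩
  have hz := key z
  have h3 : f (z - y, 0) = f (z, 0) - f (y, 0) := by
    have : ((z - y, (0:ℝ)) : V × ℝ) = (z, 0) - (y, 0) := by simp [Prod.ext_iff]
    rw [this, map_sub]
  simp only [ContinuousLinearMap.smul_apply, ContinuousLinearMap.comp_apply,
    ContinuousLinearMap.inl_apply, smul_eq_mul, h3]
  have hns : (0:ℝ) < -s := by linarith
  have h4 : (-s)⁻¹ * (f (z, 0) - f (y, 0)) ≤ (-s)⁻¹ * ((F z - F y) * (-s)) :=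
    mul_le_mul_of_nonneg_left (by nlinarith) (by positivity)
  have hs0 : s ≠ 0 := by linarith
  have h5 : (-s)⁻¹ * ((F z - F y) * (-s)) = F z - F y := by field_simp
  linarith

theorem minimal_convex_extensions_increase_to_F {V : Type*} [NormedAddCommGroup V]
    [NormedSpace ℝ V] [FiniteDimensional ℝ V]
    (K : ℝ → Set V)
    (hopen : ∀ a > (0:ℝ), IsOpen (K a))
    (hconv : ∀ a > (0:ℝ), Convex ℝ (K a))
    (hne : ∀ a > (0:ℝ), (K a).Nonempty)
    (hnested : ∀ a b : ℝ, 0 < a → a ≤ b → K a ⊆ K b)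
    (hunion : ⋃ a ∈ Set.Ioi (0:ℝ), K a = Set.univ)
    (F : V → ℝ) (hF : ConvexOn ℝ Set.univ F)
    (hFlip : ∀ a > (0:ℝ), ∃ L : NNReal, LipschitzOnWith L F (K a)) :
    ∀ x : V,
      (∀ a b : ℝ, 0 < a → a ≤ b → minConvExt (K a) F x ≤ minConvExt (K b) F x) ∧
      Tendsto (fun a : ℝ => minConvExt (K a) F x) atTop (nhds (F x)) := by
  -- Any local subgradient on an open set is a global subgradient.
  have glob : ∀ a > (0:ℝ), ∀ y ∈ K a, ∀ φ : V →L[ℝ] ℝ,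
      (∀ z ∈ K a, F y + φ (z - y) ≤ F z) → ∀ z, F y + φ (z - y) ≤ F z := by
    intro a ha y hy φ hφ z
    -- find ε ∈ (0,1] with y + ε (z - y) ∈ K a
    have hcont : ContinuousAt (fun ε : ℝ => y + ε • (z - y)) 0 := by
      fun_prop
    have h0 : (fun ε : ℝ => y + ε • (z - y)) 0 ∈ K a := by simpa using hy
    have hnhds : ∀ᶠ ε : ℝ in nhds 0, y + ε • (z - y) ∈ K a :=
      hcont.eventually_mem ((hopen a ha).mem_nhds h0)
    obtain ⟨δ, hδ, hball⟩ := Metric.eventually_nhds_iff.mp hnhds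
    set ε := min (δ / 2) 1 with hε
    have hε0 : 0 < ε := by positivity
    have hε1 : ε ≤ 1 := min_le_right _ _
    have hmem : y + ε • (z - y) ∈ K a := by
      apply hball
      simp only [dist_zero_right, Real.norm_eq_abs, abs_of_pos hε0]
      calc ε ≤ δ / 2 := min_le_left _ _
        _ < δ := by linarith
    have h1 := hφ _ hmem
    have h2 : F (y + ε • (z - y)) ≤ (1 - ε) * F y + ε * F z := by
      have := hF.2 (Set.mem_univ y) (Set.mem_univ z) (by linarith : (0:ℝ) ≤ 1 - ε)
        hε0.le (by ring)
      convert this using 2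
      · rfl
      · module
      · rfl
      · rfl
    have h3 : φ (y + ε • (z - y) - y) = ε * φ (z - y) := by
      rw [show y + ε • (z - y) - y = ε • (z - y) by abel, map_smul, smul_eq_mul]
    rw [h3] at h1
    nlinarith
  -- the defining set
  have memset : ∀ a > (0:ℝ), ∀ x y, y ∈ K a → ∀ φ : V →L[ℝ] ℝ,
      (∀ z, F y + φ (z - y) ≤ F z) →
      F y + φ (x - y) ∈ {r : ℝ | ∃ y ∈ K a, ∃ φ : V →L[ℝ] ℝ,
        (∀ z ∈ K a, F y + φ (z - y) ≤ F z) ∧ r = F y + φ (x - y)} := by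
    intro a ha x y hy φ hφ
    exact ⟨y, hy, φ, fun z _ => hφ z, rfl⟩
  have bdd : ∀ a > (0:ℝ), ∀ x, BddAbove {r : ℝ | ∃ y ∈ K a, ∃ φ : V →L[ℝ] ℝ,
      (∀ z ∈ K a, F y + φ (z - y) ≤ F z) ∧ r = F y + φ (x - y)} := by
    intro a ha x
    refine ⟨F x, ?_⟩
    rintro r ⟨y, hy, φ, hφ, rfl⟩
    have := glob a ha y hy φ hφ x
    linarith
  have nonemp : ∀ a > (0:ℝ), ∀ x, {r : ℝ | ∃ y ∈ K a, ∃ φ : V →L[ℝ] ℝ,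
      (∀ z ∈ K a, F y + φ (z - y) ≤ F z) ∧ r = F y + φ (x - y)}.Nonempty := by
    intro a ha x
    obtain ⟨y, hy⟩ := hne a ha
    obtain ⟨φ, hφ⟩ := exists_global_subgrad F hF y
    exact ⟨_, memset a ha x y hy φ hφ⟩
  have hub : ∀ a > (0:ℝ), ∀ x, minConvExt (K a) F x ≤ F x := by
    intro a ha x
    apply csSup_le (nonemp a ha x)
    rintro r ⟨y, hy, φ, hφ, rfl⟩
    have := glob a ha y hy φ hφ x
    linarith
  have mono : ∀ x, ∀ a b : ℝ, 0 < a → a ≤ b → minConvExt (K a) F x ≤ minConvExt (K b) F x := by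
    intro x a b ha hab
    have hb : 0 < b := lt_of_lt_of_le ha hab
    apply csSup_le_csSup (bdd b hb x) (nonemp a ha x)
    rintro r ⟨y, hy, φ, hφ, rfl⟩
    exact ⟨y, hnested a b ha hab hy, φ, fun z _ => glob a ha y hy φ hφ z, rfl⟩
  intro x
  refine ⟨mono x, ?_⟩
  -- find a₀ with x ∈ K a₀
  have hx : x ∈ ⋃ a ∈ Set.Ioi (0:ℝ), K a := by rw [hunion]; trivial
  obtain ⟨a₀, ha₀, hxa₀⟩ := by simpa using hx
  have heq : ∀ a ≥ a₀, minConvExt (K a) F x = F x := by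
    intro a haa
    have ha : 0 < a := lt_of_lt_of_le ha₀ haa
    refine le_antisymm (hub a ha x) ?_
    obtain ⟨φ, hφ⟩ := exists_global_subgrad F hF x
    have hxmem : x ∈ K a := hnested a₀ a ha₀ haa hxa₀
    have h := le_csSup (bdd a ha x) (memset a ha x x hxmem φ hφ)
    have h0 : F x + φ (x - x) = F x := by simp
    rw [minConvExt, ← h0]
    exact h
  have : (fun a : ℝ => minConvExt (K a) F x) =ᶠ[atTop] fun _ => F x :=
    eventually_atTop.2 ⟨a₀, heq⟩
  exact Tendsto.congr' this.symm tendsto_const_nhds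
end

section
/- If φ : ℝ → ℝ is convex, then the map A ↦ tr φ(A) on the space of n×n Hermitian matrices is convex, where φ(A) is defined by functional calculus (equivalently, tr φ(A) = Σᵢ φ(λᵢ(A)) where λᵢ(A) are the eigenvalues of A). -/
open Matrix

lemma diag_re_as_sum (n : ℕ) (A : Matrix (Fin n) (Fin n) ℂ) (hA : A.IsHermitian)
    (W : Matrix.unitaryGroup (Fin n) ℂ) (i : Fin n) :
    ((star (W : Matrix (Fin n) (Fin n) ℂ) * A * (W : Matrix (Fin n) (Fin n) ℂ)) i i).re
      = ∑ j, Complex.normSq ((star (W : Matrix (Fin n) (Fin n) ℂ) * (hA.eigenvectorUnitary : Matrix (Fin n) (Fin n) ℂ)) i j)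
          * hA.eigenvalues j := by
  set V : Matrix (Fin n) (Fin n) ℂ := (hA.eigenvectorUnitary : Matrix (Fin n) (Fin n) ℂ)
  set M : Matrix (Fin n) (Fin n) ℂ := star (W : Matrix (Fin n) (Fin n) ℂ) * V with hM
  have hAeq : A = V * diagonal (RCLike.ofReal ∘ hA.eigenvalues) * star V := hA.spectral_theorem
  have key : star (W : Matrix (Fin n) (Fin n) ℂ) * A * (W : Matrix (Fin n) (Fin n) ℂ)
      = M * diagonal (RCLike.ofReal ∘ hA.eigenvalues) * star M := by
    conv_lhs => rw [hAeq]
    rw [hM, StarMul.star_mul, star_star]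
    simp [Matrix.mul_assoc]
  rw [key]
  simp only [Matrix.mul_apply, diagonal_apply, Function.comp_apply, star_apply, mul_ite,
    mul_zero, Finset.sum_ite_eq', Finset.mem_univ, if_true]
  rw [Complex.re_sum]
  congr 1; ext j
  have : M i j * RCLike.ofReal (hA.eigenvalues j) * star (M i j)
      = (Complex.normSq (M i j) * hA.eigenvalues j : ℝ) := by
    push_cast
    rw [mul_comm (M i j), mul_assoc]
    rw [show M i j * star (M i j) = (Complex.normSq (M i j) : ℂ) from Complex.mul_conj _]
    exact mul_comm _ _
  rw [this, Complex.ofReal_re]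

lemma peierls (n : ℕ) (φ : ℝ → ℝ) (hφ : ConvexOn ℝ Set.univ φ)
    (A : Matrix (Fin n) (Fin n) ℂ) (hA : A.IsHermitian)
    (W : Matrix.unitaryGroup (Fin n) ℂ) :
    ∑ i, φ (((star (W : Matrix (Fin n) (Fin n) ℂ) * A * (W : Matrix (Fin n) (Fin n) ℂ)) i i).re)
      ≤ ∑ i, φ (hA.eigenvalues i) := by
  set M : Matrix (Fin n) (Fin n) ℂ :=
    star (W : Matrix (Fin n) (Fin n) ℂ) * (hA.eigenvectorUnitary : Matrix (Fin n) (Fin n) ℂ)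
    with hM
  have hMU : M ∈ Matrix.unitaryGroup (Fin n) ℂ :=
    mul_mem (Unitary.star_mem W.2) hA.eigenvectorUnitary.2
  have hrow : ∀ i, ∑ j, Complex.normSq (M i j) = 1 := by
    intro i
    have h1 := congrFun (congrFun (Matrix.mem_unitaryGroup_iff.mp hMU) i) i
    rw [Matrix.mul_apply, Matrix.one_apply_eq] at h1
    have h2 := congrArg Complex.re h1
    rw [Complex.re_sum] at h2
    simpa [Matrix.star_apply, Complex.mul_conj] using h2
  have hcol : ∀ j, ∑ i, Complex.normSq (M i j) = 1 := by
    intro j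
    have h1 := congrFun (congrFun (Matrix.mem_unitaryGroup_iff'.mp hMU) j) j
    rw [Matrix.mul_apply, Matrix.one_apply_eq] at h1
    have h2 := congrArg Complex.re h1
    rw [Complex.re_sum] at h2
    have : ∀ i, (star M j i * M i j).re = Complex.normSq (M i j) := by
      intro i
      rw [Matrix.star_apply, mul_comm]
      simpa using congrArg Complex.re (Complex.mul_conj (M i j))
    rw [Finset.sum_congr rfl (fun i _ => this i)] at h2
    exact h2
  calc ∑ i, φ (((star (W : Matrix (Fin n) (Fin n) ℂ) * A * (W : Matrix (Fin n) (Fin n) ℂ)) i i).re)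
      = ∑ i, φ (∑ j, Complex.normSq (M i j) * hA.eigenvalues j) := by
        refine Finset.sum_congr rfl fun i _ => ?_
        rw [diag_re_as_sum n A hA W i]
    _ ≤ ∑ i, ∑ j, Complex.normSq (M i j) * φ (hA.eigenvalues j) := by
        refine Finset.sum_le_sum fun i _ => ?_
        have := hφ.map_sum_le (t := Finset.univ) (w := fun j => Complex.normSq (M i j))
          (p := fun j => hA.eigenvalues j)
          (fun j _ => Complex.normSq_nonneg _) (hrow i) (fun j _ => Set.mem_univ _)
        simpa [smul_eq_mul] using this
    _ = ∑ j, (∑ i, Complex.normSq (M i j)) * φ (hA.eigenvalues j) := by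
        rw [Finset.sum_comm]
        simp [Finset.sum_mul]
    _ = ∑ i, φ (hA.eigenvalues i) := by
        refine Finset.sum_congr rfl fun j _ => ?_
        rw [hcol j, one_mul]

lemma isHermitian_real_smul {n : ℕ} (a : ℝ) {A : Matrix (Fin n) (Fin n) ℂ}
    (hA : A.IsHermitian) : (a • A).IsHermitian := by
  ext i j
  have h := congrFun (congrFun hA i) j
  rw [Matrix.conjTranspose_apply] at h
  simp only [Matrix.conjTranspose_apply, Matrix.smul_apply]
  rw [star_smul, star_trivial, h]

theorem trace_phi_convex (n : ℕ) (φ : ℝ → ℝ) (hφ : ConvexOn ℝ Set.univ φ) :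
    ConvexOn ℝ {A : Matrix (Fin n) (Fin n) ℂ | A.IsHermitian}
      (fun A : Matrix (Fin n) (Fin n) ℂ =>
        if h : A.IsHermitian then ∑ i, φ (h.eigenvalues i) else 0) := by
  constructor
  · intro A hA B hB a b ha hb hab
    exact (isHermitian_real_smul a hA).add (isHermitian_real_smul b hB)
  · intro A hA B hB a b ha hb hab
    simp only [Set.mem_setOf_eq] at hA hB
    have hC : (a • A + b • B).IsHermitian := (isHermitian_real_smul a hA).add (isHermitian_real_smul b hB)
    simp only [dif_pos hA, dif_pos hB, dif_pos hC]
    set W := hC.eigenvectorUnitary with hW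
    have hdiag : star (W : Matrix (Fin n) (Fin n) ℂ) * (a • A + b • B) * (W : Matrix (Fin n) (Fin n) ℂ)
        = diagonal (RCLike.ofReal ∘ hC.eigenvalues) := by
      simpa [hW] using hC.conjStarAlgAut_star_eigenvectorUnitary
    have hq : ∀ i, hC.eigenvalues i =
        a * ((star (W : Matrix (Fin n) (Fin n) ℂ) * A * (W : Matrix (Fin n) (Fin n) ℂ)) i i).re
        + b * ((star (W : Matrix (Fin n) (Fin n) ℂ) * B * (W : Matrix (Fin n) (Fin n) ℂ)) i i).re := by
      intro i
      have h1 := congrFun (congrFun hdiag i) i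
      rw [Matrix.diagonal_apply_eq] at h1
      have h2 : star (W : Matrix (Fin n) (Fin n) ℂ) * (a • A + b • B) * (W : Matrix (Fin n) (Fin n) ℂ)
          = a • (star (W : Matrix (Fin n) (Fin n) ℂ) * A * (W : Matrix (Fin n) (Fin n) ℂ))
          + b • (star (W : Matrix (Fin n) (Fin n) ℂ) * B * (W : Matrix (Fin n) (Fin n) ℂ)) := by
        rw [Matrix.mul_add, Matrix.add_mul, Matrix.mul_smul, Matrix.mul_smul,
          Matrix.smul_mul, Matrix.smul_mul]
      rw [h2] at h1
      have h3 := congrArg Complex.re h1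
      simpa [Complex.add_re, Complex.smul_re] using h3.symm
    calc ∑ i, φ (hC.eigenvalues i)
        ≤ ∑ i, (a * φ (((star (W : Matrix (Fin n) (Fin n) ℂ) * A * (W : Matrix (Fin n) (Fin n) ℂ)) i i).re)
            + b * φ (((star (W : Matrix (Fin n) (Fin n) ℂ) * B * (W : Matrix (Fin n) (Fin n) ℂ)) i i).re)) := by
          refine Finset.sum_le_sum fun i _ => ?_
          rw [hq i]
          have := hφ.2 (x := ((star (W : Matrix (Fin n) (Fin n) ℂ) * A * (W : Matrix (Fin n) (Fin n) ℂ)) i i).re)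
            (y := ((star (W : Matrix (Fin n) (Fin n) ℂ) * B * (W : Matrix (Fin n) (Fin n) ℂ)) i i).re)
            (Set.mem_univ _) (Set.mem_univ _) ha hb hab
          simpa [smul_eq_mul] using this
      _ = a * ∑ i, φ (((star (W : Matrix (Fin n) (Fin n) ℂ) * A * (W : Matrix (Fin n) (Fin n) ℂ)) i i).re)
          + b * ∑ i, φ (((star (W : Matrix (Fin n) (Fin n) ℂ) * B * (W : Matrix (Fin n) (Fin n) ℂ)) i i).re) := by
          rw [Finset.sum_add_distrib, Finset.mul_sum, Finset.mul_sum]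
      _ ≤ a * ∑ i, φ (hA.eigenvalues i) + b * ∑ i, φ (hB.eigenvalues i) := by
          exact add_le_add (mul_le_mul_of_nonneg_left (peierls n φ hφ A hA W) ha)
            (mul_le_mul_of_nonneg_left (peierls n φ hφ B hB W) hb)
      _ = a • ∑ i, φ (hA.eigenvalues i) + b • ∑ i, φ (hB.eigenvalues i) := by
          simp [smul_eq_mul]
end

section
/- For any integer d ≥ 3 odd, the functions F^±(A) = Σᵢ (λᵢ(A))_±^d are convex on the space of n×n Hermitian matrices, and tr(A^d) = F^+(A) − F^−(A). -/
open Matrix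

private lemma my_parseval {n : ℕ} {E : Type*} [NormedAddCommGroup E] [InnerProductSpace ℂ E]
    (b : OrthonormalBasis (Fin n) ℂ E) (x : E) (hx : ‖x‖ = 1) :
    ∑ i, ‖(inner ℂ (b i) x : ℂ)‖ ^ 2 = 1 := by
  have h := b.sum_inner_mul_inner x x
  have h2 : ∀ i, (inner ℂ x (b i) : ℂ) * inner ℂ (b i) x = (‖(inner ℂ (b i) x : ℂ)‖ ^ 2 : ℝ) := by
    intro i
    rw [← inner_conj_symm (b i) x, RCLike.mul_conj, RCLike.norm_conj]
    norm_cast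
  simp_rw [h2] at h
  have h3 : (inner ℂ x x : ℂ) = 1 := by
    rw [inner_self_eq_norm_sq_to_K, hx]; norm_num
  rw [h3] at h
  exact_mod_cast congrArg Complex.re h

private lemma my_quad_eq {n : ℕ} {A : Matrix (Fin n) (Fin n) ℂ} (hA : A.IsHermitian)
    (x : EuclideanSpace ℂ (Fin n)) :
    (star (x : Fin n → ℂ) ⬝ᵥ A *ᵥ (x : Fin n → ℂ)).re =
      ∑ j, ‖(inner ℂ (hA.eigenvectorBasis j) x : ℂ)‖ ^ 2 * hA.eigenvalues j := by
  have e1 : star (x : Fin n → ℂ) ⬝ᵥ A *ᵥ (x : Fin n → ℂ)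
      = (inner ℂ x (WithLp.toLp 2 (A *ᵥ (x : Fin n → ℂ)) : EuclideanSpace ℂ (Fin n)) : ℂ) := by
    rw [EuclideanSpace.inner_eq_star_dotProduct, dotProduct_comm]
  rw [e1, ← (hA.eigenvectorBasis).sum_inner_mul_inner x]
  have e2 : ∀ j, (inner ℂ (hA.eigenvectorBasis j)
      (WithLp.toLp 2 (A *ᵥ (x : Fin n → ℂ)) : EuclideanSpace ℂ (Fin n)) : ℂ)
      = hA.eigenvalues j • (inner ℂ (hA.eigenvectorBasis j) x : ℂ) := by
    intro j
    have h1 : (inner ℂ (hA.eigenvectorBasis j)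
        (WithLp.toLp 2 (A *ᵥ (x : Fin n → ℂ)) : EuclideanSpace ℂ (Fin n)) : ℂ)
        = star (hA.eigenvectorBasis j : Fin n → ℂ) ⬝ᵥ (A *ᵥ (x : Fin n → ℂ)) := by
      rw [EuclideanSpace.inner_eq_star_dotProduct, dotProduct_comm]
    rw [h1, dotProduct_mulVec]
    have h2 : star ((hA.eigenvectorBasis j : Fin n → ℂ)) ᵥ* A
        = star (A *ᵥ (hA.eigenvectorBasis j : Fin n → ℂ)) := by
      rw [star_mulVec, hA.eq]
    have h4 : A *ᵥ (hA.eigenvectorBasis j : Fin n → ℂ)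
        = hA.eigenvalues j • (hA.eigenvectorBasis j : Fin n → ℂ) :=
      hA.mulVec_eigenvectorBasis j
    rw [h2, h4, star_smul, star_trivial, smul_dotProduct]
    rw [EuclideanSpace.inner_eq_star_dotProduct, dotProduct_comm]
  simp_rw [e2]
  have e3 : ∀ j, (inner ℂ x (hA.eigenvectorBasis j) : ℂ) *
      (hA.eigenvalues j • (inner ℂ (hA.eigenvectorBasis j) x : ℂ))
      = hA.eigenvalues j • ((‖(inner ℂ (hA.eigenvectorBasis j) x : ℂ)‖ ^ 2 : ℝ) : ℂ) := by
    intro j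
    rw [mul_smul_comm, ← inner_conj_symm (hA.eigenvectorBasis j) x, RCLike.mul_conj,
      RCLike.norm_conj]
    norm_cast
    simp [Complex.real_smul, smul_eq_mul]
  have e4 : ∀ (r s : ℝ), ((r • (s : ℂ)).re) = s * r := by
    intro r s
    rw [Complex.real_smul]
    simp [mul_comm]
  simp_rw [e3, Complex.re_sum, e4]

/-- Peierls inequality. -/
private lemma my_peierls {n : ℕ} {A : Matrix (Fin n) (Fin n) ℂ} (hA : A.IsHermitian)
    {f : ℝ → ℝ} (hf : ConvexOn ℝ Set.univ f)
    (u : OrthonormalBasis (Fin n) ℂ (EuclideanSpace ℂ (Fin n))) :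
    ∑ i, f ((star (u i : Fin n → ℂ) ⬝ᵥ A *ᵥ (u i : Fin n → ℂ)).re)
      ≤ ∑ j, f (hA.eigenvalues j) := by
  have key : ∀ i, f ((star (u i : Fin n → ℂ) ⬝ᵥ A *ᵥ (u i : Fin n → ℂ)).re)
      ≤ ∑ j, ‖(inner ℂ (hA.eigenvectorBasis j) (u i) : ℂ)‖ ^ 2 * f (hA.eigenvalues j) := by
    intro i
    rw [my_quad_eq hA (u i)]
    have hw : ∀ j ∈ Finset.univ, (0:ℝ) ≤ ‖(inner ℂ (hA.eigenvectorBasis j) (u i) : ℂ)‖ ^ 2 :=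
      fun j _ => sq_nonneg _
    have hw1 : ∑ j, ‖(inner ℂ (hA.eigenvectorBasis j) (u i) : ℂ)‖ ^ 2 = 1 :=
      my_parseval _ _ (u.orthonormal.1 i)
    have h := hf.map_sum_le hw hw1 (fun j _ => Set.mem_univ (hA.eigenvalues j))
    simpa only [smul_eq_mul] using h
  calc ∑ i, f ((star (u i : Fin n → ℂ) ⬝ᵥ A *ᵥ (u i : Fin n → ℂ)).re)
      ≤ ∑ i, ∑ j, ‖(inner ℂ (hA.eigenvectorBasis j) (u i) : ℂ)‖ ^ 2 * f (hA.eigenvalues j) :=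
        Finset.sum_le_sum fun i _ => key i
    _ = ∑ j, (∑ i, ‖(inner ℂ (hA.eigenvectorBasis j) (u i) : ℂ)‖ ^ 2) * f (hA.eigenvalues j) := by
        rw [Finset.sum_comm]
        simp_rw [Finset.sum_mul]
    _ = ∑ j, f (hA.eigenvalues j) := by
        apply Finset.sum_congr rfl
        intro j _
        have h5 : ∑ i, ‖(inner ℂ (hA.eigenvectorBasis j) (u i) : ℂ)‖ ^ 2 = 1 := by
          have h1 : ∀ i : Fin n, ‖(inner ℂ (hA.eigenvectorBasis j) (u i) : ℂ)‖ ^ 2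
              = ‖(inner ℂ (u i) (hA.eigenvectorBasis j) : ℂ)‖ ^ 2 := fun i => by
            rw [norm_inner_symm]
          simp_rw [h1]
          exact my_parseval u _ (hA.eigenvectorBasis.orthonormal.1 j)
        rw [h5, one_mul]

private lemma my_convexOn_spectral {n : ℕ} {f : ℝ → ℝ} (hf : ConvexOn ℝ Set.univ f) :
    ConvexOn ℝ {A : Matrix (Fin n) (Fin n) ℂ | A.IsHermitian}
      (fun A : Matrix (Fin n) (Fin n) ℂ =>
        if h : A.IsHermitian then ∑ i, f (h.eigenvalues i) else 0) := by
  have hsmul : ∀ (r : ℝ) (M : Matrix (Fin n) (Fin n) ℂ), M.IsHermitian → (r • M).IsHermitian := by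
    intro r M hM
    unfold Matrix.IsHermitian at *
    rw [Matrix.conjTranspose_smul, star_trivial, hM]
  constructor
  · intro A hA B hB a b ha hb hab
    simp only [Set.mem_setOf_eq] at *
    exact ((hsmul a A hA).add (hsmul b B hB))
  · intro A hA B hB a b ha hb hab
    simp only [Set.mem_setOf_eq] at hA hB
    have hC : (a • A + b • B).IsHermitian := (hsmul a A hA).add (hsmul b B hB)
    simp only [dif_pos hC, dif_pos hA, dif_pos hB]
    set u := hC.eigenvectorBasis with hu
    have hq : ∀ i, hC.eigenvalues i =
        a * (star (u i : Fin n → ℂ) ⬝ᵥ A *ᵥ (u i : Fin n → ℂ)).re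
        + b * (star (u i : Fin n → ℂ) ⬝ᵥ B *ᵥ (u i : Fin n → ℂ)).re := by
      intro i
      have h00 := hC.eigenvalues_eq i
      simp only [RCLike.re_to_complex] at h00
      have h0 : hC.eigenvalues i = (star (u i : Fin n → ℂ) ⬝ᵥ
          ((a • A + b • B) *ᵥ (u i : Fin n → ℂ))).re := h00
      have h1 : (a • A + b • B) *ᵥ (u i : Fin n → ℂ)
          = a • (A *ᵥ (u i : Fin n → ℂ)) + b • (B *ᵥ (u i : Fin n → ℂ)) := by
        rw [add_mulVec, smul_mulVec, smul_mulVec]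
      rw [h0, h1, dotProduct_add, dotProduct_smul, dotProduct_smul]
      simp [Complex.smul_re]
    calc ∑ i, f (hC.eigenvalues i)
        ≤ ∑ i, (a * f ((star (u i : Fin n → ℂ) ⬝ᵥ A *ᵥ (u i : Fin n → ℂ)).re)
          + b * f ((star (u i : Fin n → ℂ) ⬝ᵥ B *ᵥ (u i : Fin n → ℂ)).re)) := by
          apply Finset.sum_le_sum
          intro i _
          rw [hq i]
          simpa [smul_eq_mul] using
            hf.2 (Set.mem_univ _) (Set.mem_univ _) ha hb hab
      _ = a * ∑ i, f ((star (u i : Fin n → ℂ) ⬝ᵥ A *ᵥ (u i : Fin n → ℂ)).re)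
          + b * ∑ i, f ((star (u i : Fin n → ℂ) ⬝ᵥ B *ᵥ (u i : Fin n → ℂ)).re) := by
          rw [Finset.sum_add_distrib, Finset.mul_sum, Finset.mul_sum]
      _ ≤ a * ∑ j, f (hA.eigenvalues j) + b * ∑ j, f (hB.eigenvalues j) :=
          add_le_add (mul_le_mul_of_nonneg_left (my_peierls hA hf u) ha)
            (mul_le_mul_of_nonneg_left (my_peierls hB hf u) hb)
      _ = a • ∑ j, f (hA.eigenvalues j) + b • ∑ j, f (hB.eigenvalues j) := by
          simp [smul_eq_mul]

private lemma my_pospart_convex {d : ℕ} (hd : 2 ≤ d) :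
    ConvexOn ℝ Set.univ (fun x : ℝ => (max 0 x) ^ d) := by
  have himg : (fun x : ℝ => max 0 x) '' Set.univ = Set.Ici 0 := by
    ext y
    constructor
    · rintro ⟨x, -, rfl⟩; exact Set.mem_Ici.mpr (le_max_left 0 x)
    · intro hy; exact ⟨y, Set.mem_univ y, max_eq_right hy⟩
  have h1 : ConvexOn ℝ Set.univ (fun x : ℝ => max 0 x) := by
    refine ⟨convex_univ, fun x _ y _ a b ha hb hab => ?_⟩
    simp only [smul_eq_mul]
    apply max_le
    · exact add_nonneg (mul_nonneg ha (le_max_left 0 x)) (mul_nonneg hb (le_max_left 0 y))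
    · exact add_le_add (mul_le_mul_of_nonneg_left (le_max_right 0 x) ha)
        (mul_le_mul_of_nonneg_left (le_max_right 0 y) hb)
  have h2 : ConvexOn ℝ ((fun x : ℝ => max 0 x) '' Set.univ) (fun x : ℝ => x ^ d) := by
    rw [himg]; exact (strictConvexOn_pow hd).convexOn
  have h3 : MonotoneOn (fun x : ℝ => x ^ d) ((fun x : ℝ => max 0 x) '' Set.univ) := by
    rw [himg]; exact fun x hx y hy hxy => pow_le_pow_left₀ hx hxy d
  exact h2.comp h1 h3

private lemma my_negpart_convex {d : ℕ} (hd : 2 ≤ d) :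
    ConvexOn ℝ Set.univ (fun x : ℝ => (max 0 (-x)) ^ d) := by
  have himg : (fun x : ℝ => max 0 (-x)) '' Set.univ = Set.Ici 0 := by
    ext y
    constructor
    · rintro ⟨x, -, rfl⟩; exact Set.mem_Ici.mpr (le_max_left 0 (-x))
    · intro hy; exact ⟨-y, Set.mem_univ _, by simp [max_eq_right (Set.mem_Ici.mp hy)]⟩
  have h1 : ConvexOn ℝ Set.univ (fun x : ℝ => max 0 (-x)) := by
    refine ⟨convex_univ, fun x _ y _ a b ha hb hab => ?_⟩
    simp only [smul_eq_mul]
    apply max_le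
    · exact add_nonneg (mul_nonneg ha (le_max_left 0 (-x))) (mul_nonneg hb (le_max_left 0 (-y)))
    · have hr : -(a * x + b * y) = a * (-x) + b * (-y) := by ring
      rw [hr]
      exact add_le_add (mul_le_mul_of_nonneg_left (le_max_right 0 (-x)) ha)
        (mul_le_mul_of_nonneg_left (le_max_right 0 (-y)) hb)
  have h2 : ConvexOn ℝ ((fun x : ℝ => max 0 (-x)) '' Set.univ) (fun x : ℝ => x ^ d) := by
    rw [himg]; exact (strictConvexOn_pow hd).convexOn
  have h3 : MonotoneOn (fun x : ℝ => x ^ d) ((fun x : ℝ => max 0 (-x)) '' Set.univ) := by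
    rw [himg]; exact fun x hx y hy hxy => pow_le_pow_left₀ hx hxy d
  exact h2.comp h1 h3

private lemma my_trace_pow {n : ℕ} {A : Matrix (Fin n) (Fin n) ℂ} (hA : A.IsHermitian) (d : ℕ) :
    (A ^ d).trace = ∑ i, ((hA.eigenvalues i : ℂ)) ^ d := by
  set V := (hA.eigenvectorUnitary : Matrix (Fin n) (Fin n) ℂ) with hV
  set D := diagonal (RCLike.ofReal ∘ hA.eigenvalues : Fin n → ℂ) with hD
  have hVV : V * star V = 1 := (Matrix.mem_unitaryGroup_iff).mp hA.eigenvectorUnitary.2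
  have hVV' : star V * V = 1 := (Matrix.mem_unitaryGroup_iff').mp hA.eigenvectorUnitary.2
  have hpow : A ^ d = V * D ^ d * star V := by
    induction d with
    | zero => simp [hVV]
    | succ k ih =>
      rw [pow_succ, ih, hA.spectral_theorem]
      calc V * D ^ k * star V * (V * D * star V)
          = V * D ^ k * (star V * V) * D * star V := by
            simp only [Matrix.mul_assoc]
        _ = V * D ^ (k + 1) * star V := by
            rw [hVV', Matrix.mul_one, pow_succ]
            simp only [Matrix.mul_assoc]
  rw [hpow, Matrix.trace_mul_cycle, hVV', Matrix.one_mul, hD,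
    Matrix.diagonal_pow, Matrix.trace_diagonal]
  rfl

theorem trace_pow_odd_decomposition (n d : ℕ) (hd : 3 ≤ d) (hdo : Odd d) :
    ConvexOn ℝ {A : Matrix (Fin n) (Fin n) ℂ | A.IsHermitian}
      (fun A : Matrix (Fin n) (Fin n) ℂ =>
        if h : A.IsHermitian then ∑ i, (max 0 (h.eigenvalues i)) ^ d else 0) ∧
    ConvexOn ℝ {A : Matrix (Fin n) (Fin n) ℂ | A.IsHermitian}
      (fun A : Matrix (Fin n) (Fin n) ℂ =>
        if h : A.IsHermitian then ∑ i, (max 0 (-(h.eigenvalues i))) ^ d else 0) ∧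
    ∀ (A : Matrix (Fin n) (Fin n) ℂ) (h : A.IsHermitian),
      ((A ^ d).trace).re =
        (∑ i, (max 0 (h.eigenvalues i)) ^ d) - ∑ i, (max 0 (-(h.eigenvalues i))) ^ d := by
  have hd2 : 2 ≤ d := by omega
  refine ⟨my_convexOn_spectral (my_pospart_convex hd2),
    my_convexOn_spectral (my_negpart_convex hd2), ?_⟩
  intro A h
  rw [my_trace_pow h d]
  have hre : (∑ i, ((h.eigenvalues i : ℂ)) ^ d).re = ∑ i, (h.eigenvalues i) ^ d := by
    rw [Complex.re_sum]
    apply Finset.sum_congr rfl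
    intro i _
    rw [← Complex.ofReal_pow]
    exact Complex.ofReal_re _
  rw [hre, ← Finset.sum_sub_distrib]
  apply Finset.sum_congr rfl
  intro i _
  set x := h.eigenvalues i
  rcases le_total 0 x with hx | hx
  · rw [max_eq_right hx, max_eq_left (neg_nonpos_of_nonneg hx), zero_pow (by omega), sub_zero]
  · rw [max_eq_left hx, max_eq_right (neg_nonneg_of_nonpos hx), zero_pow (by omega), zero_sub,
      hdo.neg_pow, neg_neg]
end

section
/- The map sending an n×n Hermitian matrix A to its vector of eigenvalues (λ₁(A), …, λₙ(A)) arranged in nonincreasing order is 1-Lipschitz from (M_n^{sa}, Hilbert-Schmidt norm) to (ℝⁿ, Euclidean norm). -/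
open Matrix Finset

attribute [local instance] Matrix.frobeniusNormedAddCommGroup

/-- Rearrangement inequality for doubly stochastic matrices. -/
lemma hw_rearrange {n : ℕ} (S : Matrix (Fin n) (Fin n) ℝ) (hS : S ∈ doublyStochastic ℝ (Fin n))
    (μ ν : Fin n → ℝ) (hμ : Antitone μ) (hν : Antitone ν) :
    ∑ i, ∑ j, S i j * (μ i * ν j) ≤ ∑ i, μ i * ν i := by
  obtain ⟨w, hw0, hw1, hwS⟩ := exists_eq_sum_perm_of_mem_doublyStochastic hS
  have hmono : Monovary μ ν := hμ.monovary hν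
  have hentry : ∀ i j, S i j = ∑ σ : Equiv.Perm (Fin n), w σ * (σ.permMatrix ℝ i j) := by
    intro i j
    rw [← hwS]
    simp [Matrix.sum_apply]
  have hperm : ∀ σ : Equiv.Perm (Fin n),
      ∑ i, ∑ j, (σ.permMatrix ℝ) i j * (μ i * ν j) = ∑ i, μ i * ν (σ i) := by
    intro σ
    refine Finset.sum_congr rfl fun i _ => ?_
    simp [Equiv.Perm.permMatrix, PEquiv.toMatrix_apply, Equiv.toPEquiv_apply, ite_mul,
      Finset.sum_ite_eq]
  have key : ∑ σ : Equiv.Perm (Fin n), w σ * ∑ i, μ i * ν (σ i)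
      = ∑ i, ∑ j, S i j * (μ i * ν j) := by
    simp_rw [← hperm, Finset.mul_sum, hentry, Finset.sum_mul]
    rw [Finset.sum_comm]
    refine Finset.sum_congr rfl fun i _ => ?_
    rw [Finset.sum_comm]
    simp [mul_assoc]
  calc ∑ i, ∑ j, S i j * (μ i * ν j)
      = ∑ σ : Equiv.Perm (Fin n), w σ * ∑ i, μ i * ν (σ i) := key.symm
    _ ≤ ∑ σ : Equiv.Perm (Fin n), w σ * ∑ i, μ i * ν i := by
        refine Finset.sum_le_sum fun σ _ => ?_
        exact mul_le_mul_of_nonneg_left (hmono.sum_mul_comp_perm_le_sum_mul (σ := σ)) (hw0 σ)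
    _ = ∑ i, μ i * ν i := by rw [← Finset.sum_mul, hw1, one_mul]

/-- Squared moduli of a unitary matrix form a doubly stochastic matrix. -/
lemma hw_unitary_ds {n : ℕ} (W : Matrix (Fin n) (Fin n) ℂ) (hW : W ∈ Matrix.unitaryGroup (Fin n) ℂ) :
    (Matrix.of fun i j => Complex.normSq (W i j)) ∈ doublyStochastic ℝ (Fin n) := by
  rw [mem_doublyStochastic_iff_sum]
  have h1 : W * star W = 1 := (Matrix.mem_unitaryGroup_iff).mp hW
  have h2 : star W * W = 1 := (Matrix.mem_unitaryGroup_iff').mp hW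
  refine ⟨fun i j => Complex.normSq_nonneg _, ?_, ?_⟩
  · intro i
    have := congr_arg Complex.re (congr_fun (congr_fun h1 i) i)
    simp only [Matrix.mul_apply, Matrix.one_apply_eq, Matrix.star_apply, RCLike.star_def,
      Complex.mul_conj, Complex.re_sum, Complex.one_re, Complex.ofReal_re] at this
    simpa using this
  · intro j
    have := congr_arg Complex.re (congr_fun (congr_fun h2 j) j)
    simp only [Matrix.mul_apply, Matrix.one_apply_eq, Matrix.star_apply, RCLike.star_def] at this
    simp_rw [mul_comm, Complex.mul_conj, Complex.re_sum] at this
    simpa using this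

/-- Trace formula for the product of two Hermitian matrices. -/
lemma hw_trace_mul {n : ℕ} (A B : Matrix (Fin n) (Fin n) ℂ)
    (hA : A.IsHermitian) (hB : B.IsHermitian) :
    (A * B).trace =
      ((∑ i, ∑ j, hA.eigenvalues i * hB.eigenvalues j *
        Complex.normSq ((star (hA.eigenvectorUnitary : Matrix (Fin n) (Fin n) ℂ) *
          (hB.eigenvectorUnitary : Matrix (Fin n) (Fin n) ℂ)) i j) : ℝ) : ℂ) := by
  set U : Matrix (Fin n) (Fin n) ℂ := (hA.eigenvectorUnitary : Matrix (Fin n) (Fin n) ℂ) with hU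
  set V : Matrix (Fin n) (Fin n) ℂ := (hB.eigenvectorUnitary : Matrix (Fin n) (Fin n) ℂ) with hV
  set D : Matrix (Fin n) (Fin n) ℂ := diagonal (RCLike.ofReal ∘ hA.eigenvalues) with hD
  set E : Matrix (Fin n) (Fin n) ℂ := diagonal (RCLike.ofReal ∘ hB.eigenvalues) with hE
  set W : Matrix (Fin n) (Fin n) ℂ := star U * V with hWdef
  have hAe : A = U * D * star U := hA.spectral_theorem
  have hBe : B = V * E * star V := hB.spectral_theorem
  have hUU : U * star U = 1 := Matrix.mem_unitaryGroup_iff.mp hA.eigenvectorUnitary.2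
  have hUU' : star U * U = 1 := Matrix.mem_unitaryGroup_iff'.mp hA.eigenvectorUnitary.2
  have hsW : star W = star V * U := by rw [hWdef, StarMul.star_mul, star_star]
  have h1 : A * B = U * (D * W * E * star W) * star U := by
    rw [hAe, hBe, hsW, hWdef]
    have h2 : U * (D * (star U * V) * E * (star V * U)) * star U
        = U * D * star U * (V * E * star V) * (U * star U) := by
      simp only [Matrix.mul_assoc]
    rw [h2, hUU, Matrix.mul_one]
  have key : (A * B).trace = (D * W * E * star W).trace := by
    rw [h1, Matrix.trace_mul_cycle, ← Matrix.mul_assoc, hUU', Matrix.one_mul]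
  have hdiag : ∀ i, (D * W * E * star W) i i
      = ∑ k, ((hA.eigenvalues i : ℂ) * (hB.eigenvalues k : ℂ) * (Complex.normSq (W i k) : ℂ)) := by
    intro i
    rw [Matrix.mul_apply]
    refine Finset.sum_congr rfl fun k _ => ?_
    rw [Matrix.mul_diagonal, Matrix.diagonal_mul, Matrix.star_apply]
    have : W i k * (starRingEnd ℂ) (W i k) = (Complex.normSq (W i k) : ℂ) := Complex.mul_conj _
    simp only [Function.comp_apply, RCLike.star_def]
    rw [show (RCLike.ofReal : ℝ → ℂ) = Complex.ofReal from rfl, ← this]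
    ring
  rw [key, Matrix.trace]
  push_cast
  exact Finset.sum_congr rfl fun i _ => hdiag i

lemma hw_trace_sq {n : ℕ} (A : Matrix (Fin n) (Fin n) ℂ) (hA : A.IsHermitian) :
    (A * A).trace = ((∑ i, hA.eigenvalues i ^ 2 : ℝ) : ℂ) := by
  rw [hw_trace_mul A A hA hA]
  have hUU' : star (hA.eigenvectorUnitary : Matrix (Fin n) (Fin n) ℂ) *
      (hA.eigenvectorUnitary : Matrix (Fin n) (Fin n) ℂ) = 1 :=
    Matrix.mem_unitaryGroup_iff'.mp hA.eigenvectorUnitary.2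
  rw [hUU']
  norm_cast
  refine Finset.sum_congr rfl fun i _ => ?_
  rw [Finset.sum_eq_single i]
  · simp [Matrix.one_apply_eq, sq]
  · intro j _ hj
    simp [Matrix.one_apply_ne' hj]
  · simp

theorem eigenvalue_map_one_lipschitz (n : ℕ)
    (A B : Matrix (Fin n) (Fin n) ℂ) (hA : A.IsHermitian) (hB : B.IsHermitian)
    (μ ν : Fin n → ℝ) (hμmono : Antitone μ) (hνmono : Antitone ν)
    (hμ : ∃ σ : Equiv.Perm (Fin n), μ = hA.eigenvalues ∘ σ)
    (hν : ∃ τ : Equiv.Perm (Fin n), ν = hB.eigenvalues ∘ τ) :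
    Real.sqrt (∑ i, (μ i - ν i) ^ 2) ≤ ‖A - B‖ := by
  obtain ⟨σ, hσ⟩ := hμ
  obtain ⟨τ, hτ⟩ := hν
  set U : Matrix (Fin n) (Fin n) ℂ := (hA.eigenvectorUnitary : Matrix (Fin n) (Fin n) ℂ) with hU
  set V : Matrix (Fin n) (Fin n) ℂ := (hB.eigenvectorUnitary : Matrix (Fin n) (Fin n) ℂ) with hV
  set W : Matrix (Fin n) (Fin n) ℂ := star U * V with hW
  have hWmem : W ∈ Matrix.unitaryGroup (Fin n) ℂ :=
    mul_mem (Unitary.star_mem hA.eigenvectorUnitary.2) hB.eigenvectorUnitary.2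
  set S : Matrix (Fin n) (Fin n) ℝ := Matrix.of fun i j => Complex.normSq (W i j) with hS
  have hSds : S ∈ doublyStochastic ℝ (Fin n) := hw_unitary_ds W hWmem
  set T : ℝ := ∑ i, ∑ j, hA.eigenvalues i * hB.eigenvalues j * S i j with hT
  -- trace identity
  have htr : ((A - B) * (A - B)).trace
      = ((∑ i, hA.eigenvalues i ^ 2 : ℝ) : ℂ) + ((∑ i, hB.eigenvalues i ^ 2 : ℝ) : ℂ)
        - 2 * (T : ℂ) := by
    have hexp : (A - B) * (A - B) = A * A - A * B - B * A + B * B := by noncomm_ring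
    rw [hexp, Matrix.trace_add, Matrix.trace_sub, Matrix.trace_sub,
      hw_trace_sq A hA, hw_trace_sq B hB, Matrix.trace_mul_comm B A, hw_trace_mul A B hA hB]
    push_cast [hT]
    simp only [hS, hW, hU, hV, Matrix.of_apply]
    ring
  -- trace of square of hermitian as sum of squared norms of entries
  have hC : (A - B).IsHermitian := hA.sub hB
  have htrC : ((A - B) * (A - B)).trace
      = ((∑ i, ∑ j, ‖(A - B) i j‖ ^ 2 : ℝ) : ℂ) := by
    rw [Matrix.trace]
    push_cast
    rw [Finset.sum_comm]
    refine Finset.sum_congr rfl fun j _ => ?_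
    rw [Matrix.diag_apply, Matrix.mul_apply]
    refine Finset.sum_congr rfl fun i _ => ?_
    have hji : (A - B) j i = (starRingEnd ℂ) ((A - B) i j) := by
      have := congr_fun (congr_fun hC j) i
      simpa [Matrix.conjTranspose_apply] using this.symm
    rw [hji, mul_comm, Complex.mul_conj]
    norm_cast
    rw [Complex.normSq_eq_norm_sq]
  -- real equality for the norm
  have hreal : ∑ i, ∑ j, ‖(A - B) i j‖ ^ 2
      = (∑ i, hA.eigenvalues i ^ 2) + (∑ i, hB.eigenvalues i ^ 2) - 2 * T := by
    have := htrC.symm.trans htr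
    have h2 : ((∑ i, ∑ j, ‖(A - B) i j‖ ^ 2 : ℝ) : ℂ)
        = (((∑ i, hA.eigenvalues i ^ 2) + (∑ i, hB.eigenvalues i ^ 2) - 2 * T : ℝ) : ℂ) := by
      rw [this]; push_cast; ring
    exact_mod_cast h2
  -- rearrangement bound : T ≤ ∑ μ i * ν i
  set S' : Matrix (Fin n) (Fin n) ℝ := Matrix.of fun i j => S (σ i) (τ j) with hS'
  have hS'ds : S' ∈ doublyStochastic ℝ (Fin n) := by
    rw [mem_doublyStochastic_iff_sum]
    refine ⟨fun i j => nonneg_of_mem_doublyStochastic hSds, fun i => ?_, fun j => ?_⟩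
    · rw [show ∑ j, S' i j = ∑ j, S (σ i) (τ j) from rfl, Equiv.sum_comp τ (fun j => S (σ i) j)]
      exact sum_row_of_mem_doublyStochastic hSds (σ i)
    · rw [show ∑ i, S' i j = ∑ i, S (σ i) (τ j) from rfl, Equiv.sum_comp σ (fun i => S i (τ j))]
      exact sum_col_of_mem_doublyStochastic hSds (τ j)
  have hTeq : T = ∑ i, ∑ j, S' i j * (μ i * ν j) := by
    rw [hT, ← Equiv.sum_comp σ (fun i => ∑ j, hA.eigenvalues i * hB.eigenvalues j * S i j)]
    refine Finset.sum_congr rfl fun i _ => ?_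
    rw [← Equiv.sum_comp τ (fun j => hA.eigenvalues (σ i) * hB.eigenvalues j * S (σ i) j)]
    refine Finset.sum_congr rfl fun j _ => ?_
    rw [hσ, hτ]
    simp only [Function.comp_apply, hS', Matrix.of_apply]
    ring
  have hTle : T ≤ ∑ i, μ i * ν i := by
    rw [hTeq]
    exact hw_rearrange S' hS'ds μ ν hμmono hνmono
  -- sum of squares of sorted eigenvalue differences
  have hsq : ∑ i, (μ i - ν i) ^ 2
      = (∑ i, hA.eigenvalues i ^ 2) + (∑ i, hB.eigenvalues i ^ 2) - 2 * ∑ i, μ i * ν i := by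
    rw [← Equiv.sum_comp σ (fun i => hA.eigenvalues i ^ 2),
      ← Equiv.sum_comp τ (fun i => hB.eigenvalues i ^ 2)]
    rw [hσ, hτ]
    simp only [Function.comp_apply]
    rw [← Finset.sum_add_distrib, Finset.mul_sum, ← Finset.sum_sub_distrib]
    refine Finset.sum_congr rfl fun i _ => ?_
    ring
  have hmain : ∑ i, (μ i - ν i) ^ 2 ≤ ∑ i, ∑ j, ‖(A - B) i j‖ ^ 2 := by
    rw [hsq, hreal]
    linarith
  -- convert to the frobenius norm
  have hfro : ‖A - B‖ = Real.sqrt (∑ i, ∑ j, ‖(A - B) i j‖ ^ 2) := by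
    rw [frobenius_norm_def, Real.sqrt_eq_rpow]
    congr 1
    refine Finset.sum_congr rfl fun i _ => Finset.sum_congr rfl fun j _ => ?_
    rw [show (2 : ℝ) = ((2 : ℕ) : ℝ) by norm_num, Real.rpow_natCast]
  rw [hfro]
  exact Real.sqrt_le_sqrt hmain
end

section
/- For d ≥ 2, the function F(A) = tr(A^d) is (d·a^{d−1})-Lipschitz with respect to the Hilbert-Schmidt norm on the open set K_a = { A Hermitian : ‖A‖_{2(d−1)} < a } of n×n Hermitian matrices (for d even; for d odd the same holds for F^±). -/
open Matrix

attribute [local instance] Matrix.frobeniusNormedAddCommGroup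

/-- The set of Hermitian `n × n` matrices with Schatten `2(d-1)`-norm less than `a`;
for Hermitian `A` one has `‖A‖_{2(d-1)}^{2(d-1)} = tr ((AᴴA)^(d-1))`. -/
def schattenBall (n d : ℕ) (a : ℝ) : Set (Matrix (Fin n) (Fin n) ℂ) :=
  {A | A.IsHermitian ∧ (((Aᴴ * A) ^ (d - 1)).trace).re < a ^ (2 * (d - 1))}


open Finset

section Aux

lemma pow_sub_pow_abs (d : ℕ) (s t : ℝ) :
    |s ^ d - t ^ d| ≤ (∑ k ∈ Finset.range d, |s| ^ k * |t| ^ (d - 1 - k)) * |s - t| := by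
  rw [← geom_sum₂_mul, abs_mul]
  refine mul_le_mul_of_nonneg_right ?_ (abs_nonneg _)
  refine (Finset.abs_sum_le_sum_abs _ _).trans (le_of_eq ?_)
  simp [abs_mul, abs_pow]

lemma max_pow_bound (d : ℕ) (s t : ℝ) :
    |(max 0 s) ^ d - (max 0 t) ^ d| ≤
      (∑ k ∈ Finset.range d, |s| ^ k * |t| ^ (d - 1 - k)) * |s - t| := by
  refine (pow_sub_pow_abs d _ _).trans ?_
  have h0 : ∀ u : ℝ, |max 0 u| ≤ |u| := fun u => by
    rw [abs_of_nonneg (le_max_left 0 u)]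
    exact max_le (abs_nonneg u) (le_abs_self u)
  refine mul_le_mul ?_ ?_ (abs_nonneg _) (by positivity)
  · refine Finset.sum_le_sum fun k _ => ?_
    exact mul_le_mul (pow_le_pow_left₀ (abs_nonneg _) (h0 s) k)
      (pow_le_pow_left₀ (abs_nonneg _) (h0 t) _) (by positivity) (by positivity)
  · rw [max_comm 0 s, max_comm 0 t]
    exact abs_max_sub_max_le_abs s t 0

lemma holder_step {n : ℕ} (e k : ℕ) (he : 1 ≤ e) (hk : k ≤ e) (a : ℝ) (ha : 0 < a)
    (x y : Fin n → ℝ) (hx : ∑ i, |x i| ^ (2 * e) ≤ a ^ (2 * e))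
    (hy : ∑ i, |y i| ^ (2 * e) ≤ a ^ (2 * e)) :
    ∑ i, |x i| ^ k * |y i| ^ (e - k) * |x i - y i| ≤
      a ^ e * Real.sqrt (∑ i, (x i - y i) ^ 2) := by
  have key : ∑ i, (|x i| ^ k * |y i| ^ (e - k)) ^ 2 ≤ a ^ (2 * e) := by
    have hsum : ∀ i : Fin n, (|x i| ^ k * |y i| ^ (e - k)) ^ 2
        = |x i| ^ (2 * k) * |y i| ^ (2 * (e - k)) := fun i => by
      rw [mul_pow, ← pow_mul, ← pow_mul, mul_comm k 2, mul_comm (e - k) 2]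
    simp_rw [hsum]
    rcases Nat.eq_zero_or_pos k with rfl | hk0
    · simpa using hy
    rcases eq_or_lt_of_le hk with rfl | hke
    · simpa using hx
    -- 0 < k < e : Hölder
    have hkR : (0 : ℝ) < k := by exact_mod_cast hk0
    have heR : (0 : ℝ) < e := by positivity
    have hekR : (0 : ℝ) < (e : ℝ) - k := by
      have : (k : ℝ) < e := by exact_mod_cast hke
      linarith
    have hpq : Real.HolderConjugate ((e : ℝ) / k) ((e : ℝ) / ((e : ℝ) - k)) := by
      rw [Real.holderConjugate_iff]
      constructor
      · rw [lt_div_iff₀ hkR]; norm_num; exact_mod_cast hke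
      · rw [inv_div, inv_div]; field_simp; ring
    have := Real.inner_le_Lp_mul_Lq (univ : Finset (Fin n))
      (fun i => |x i| ^ (2 * k)) (fun i => |y i| ^ (2 * (e - k))) hpq
    refine this.trans ?_
    have e1 : ∀ i : Fin n, |(|x i| ^ (2 * k))| ^ ((e : ℝ) / k) = |x i| ^ (2 * e) := by
      intro i
      rw [abs_of_nonneg (by positivity), ← Real.rpow_natCast |x i| (2 * k),
        ← Real.rpow_mul (abs_nonneg _), ← Real.rpow_natCast |x i| (2 * e)]
      congr 1
      push_cast
      field_simp
    have e2 : ∀ i : Fin n,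
        |(|y i| ^ (2 * (e - k)))| ^ ((e : ℝ) / ((e : ℝ) - k)) = |y i| ^ (2 * e) := by
      intro i
      rw [abs_of_nonneg (by positivity), ← Real.rpow_natCast |y i| (2 * (e - k)),
        ← Real.rpow_mul (abs_nonneg _), ← Real.rpow_natCast |y i| (2 * e)]
      congr 1
      push_cast [Nat.cast_sub hk]
      field_simp
    simp_rw [e1, e2]
    have hA : (∑ i, |x i| ^ (2 * e)) ^ (1 / ((e : ℝ) / k))
        ≤ (a ^ (2 * e)) ^ (1 / ((e : ℝ) / k)) :=
      Real.rpow_le_rpow (sum_nonneg fun i _ => by positivity) hx (by positivity)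
    have hB : (∑ i, |y i| ^ (2 * e)) ^ (1 / ((e : ℝ) / ((e : ℝ) - k)))
        ≤ (a ^ (2 * e)) ^ (1 / ((e : ℝ) / ((e : ℝ) - k))) :=
      Real.rpow_le_rpow (sum_nonneg fun i _ => by positivity) hy (by positivity)
    refine (mul_le_mul hA hB (Real.rpow_nonneg
      (sum_nonneg fun i _ => by positivity) _) (Real.rpow_nonneg (by positivity) _)).trans
      (le_of_eq ?_)
    rw [← Real.rpow_natCast a (2 * e), ← Real.rpow_mul ha.le, ← Real.rpow_mul ha.le,
      ← Real.rpow_add ha]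
    congr 1
    push_cast
    field_simp
    ring
  calc ∑ i, |x i| ^ k * |y i| ^ (e - k) * |x i - y i|
      ≤ Real.sqrt (∑ i, (|x i| ^ k * |y i| ^ (e - k)) ^ 2)
        * Real.sqrt (∑ i, |x i - y i| ^ 2) :=
        Real.sum_mul_le_sqrt_mul_sqrt _ _ _
    _ ≤ a ^ e * Real.sqrt (∑ i, (x i - y i) ^ 2) := by
        simp_rw [sq_abs]
        refine mul_le_mul_of_nonneg_right ?_ (Real.sqrt_nonneg _)
        refine (Real.sqrt_le_sqrt key).trans (le_of_eq ?_)
        rw [two_mul, pow_add, Real.sqrt_mul_self (by positivity)]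

lemma master {n : ℕ} (d : ℕ) (hd : 2 ≤ d) (a : ℝ) (ha : 0 < a) (φ : ℝ → ℝ)
    (hφ : ∀ s t : ℝ, |φ s - φ t| ≤
      (∑ k ∈ Finset.range d, |s| ^ k * |t| ^ (d - 1 - k)) * |s - t|)
    (x y : Fin n → ℝ) (hx : ∑ i, |x i| ^ (2 * (d - 1)) ≤ a ^ (2 * (d - 1)))
    (hy : ∑ i, |y i| ^ (2 * (d - 1)) ≤ a ^ (2 * (d - 1))) :
    |∑ i, φ (x i) - ∑ i, φ (y i)| ≤
      d * a ^ (d - 1) * Real.sqrt (∑ i, (x i - y i) ^ 2) := by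
  calc |∑ i, φ (x i) - ∑ i, φ (y i)|
      = |∑ i, (φ (x i) - φ (y i))| := by rw [Finset.sum_sub_distrib]
    _ ≤ ∑ i, |φ (x i) - φ (y i)| := Finset.abs_sum_le_sum_abs _ _
    _ ≤ ∑ i, ∑ k ∈ Finset.range d, |x i| ^ k * |y i| ^ (d - 1 - k) * |x i - y i| := by
        refine Finset.sum_le_sum fun i _ => (hφ _ _).trans (le_of_eq ?_)
        rw [Finset.sum_mul]
    _ = ∑ k ∈ Finset.range d, ∑ i, |x i| ^ k * |y i| ^ (d - 1 - k) * |x i - y i| :=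
        Finset.sum_comm
    _ ≤ ∑ _k ∈ Finset.range d, a ^ (d - 1) * Real.sqrt (∑ i, (x i - y i) ^ 2) := by
        refine Finset.sum_le_sum fun k hk => ?_
        exact holder_step (d - 1) k (by omega) (by simp at hk; omega) a ha x y hx hy
    _ = d * a ^ (d - 1) * Real.sqrt (∑ i, (x i - y i) ^ 2) := by
        rw [Finset.sum_const, Finset.card_range, nsmul_eq_mul, mul_assoc]

variable {n : ℕ} {A B : Matrix (Fin n) (Fin n) ℂ}

lemma conj_pow_aux (U D : Matrix (Fin n) (Fin n) ℂ) (hUU' : star U * U = 1) (k : ℕ) :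
    (U * D * star U) ^ k = U * D ^ k * star U := by
  induction k with
  | zero =>
    simpa using (Unitary.mul_star_self_of_mem (Matrix.mem_unitaryGroup_iff'.mpr hUU')).symm
  | succ k ih =>
    rw [pow_succ, pow_succ, ih]
    simp only [Matrix.mul_assoc]
    rw [← Matrix.mul_assoc (star U) U, hUU']
    simp [Matrix.mul_assoc]

lemma conj_pow_eq (hA : A.IsHermitian) (k : ℕ) :
    A ^ k = (hA.eigenvectorUnitary : Matrix (Fin n) (Fin n) ℂ)
      * (Matrix.diagonal (fun i => (hA.eigenvalues i : ℂ))) ^ k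
      * (star (hA.eigenvectorUnitary : Matrix (Fin n) (Fin n) ℂ)) := by
  have hspec : A = (hA.eigenvectorUnitary : Matrix (Fin n) (Fin n) ℂ)
      * Matrix.diagonal (fun i => (hA.eigenvalues i : ℂ))
      * (star (hA.eigenvectorUnitary : Matrix (Fin n) (Fin n) ℂ)) := by
    exact hA.spectral_theorem
  calc A ^ k = _ := congrArg (· ^ k) hspec
    _ = _ := conj_pow_aux _ _ (Unitary.star_mul_self_of_mem hA.eigenvectorUnitary.2) k

lemma trace_pow_re (hA : A.IsHermitian) (k : ℕ) :
    ((A ^ k).trace).re = ∑ i, hA.eigenvalues i ^ k := by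
  rw [conj_pow_eq hA k, Matrix.trace_mul_comm, ← Matrix.mul_assoc,
    Unitary.star_mul_self_of_mem hA.eigenvectorUnitary.2, Matrix.one_mul,
    Matrix.diagonal_pow, Matrix.trace_diagonal]
  rw [Complex.re_sum]
  congr 1; funext i
  rw [Pi.pow_apply, ← Complex.ofReal_pow, Complex.ofReal_re]

/-- existence of the doubly stochastic weighting -/
lemma exists_ds (hA : A.IsHermitian) (hB : B.IsHermitian) :
    ∃ w : Matrix (Fin n) (Fin n) ℝ, w ∈ doublyStochastic ℝ (Fin n) ∧
      ((A * B).trace).re = ∑ i, ∑ j, hA.eigenvalues i * hB.eigenvalues j * w i j := by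
  set U := (hA.eigenvectorUnitary : Matrix (Fin n) (Fin n) ℂ) with hU
  set V := (hB.eigenvectorUnitary : Matrix (Fin n) (Fin n) ℂ) with hV
  set W := star U * V with hWdef
  have hUu : star U * U = 1 := Unitary.star_mul_self_of_mem hA.eigenvectorUnitary.2
  have hVu : V * star V = 1 := Unitary.mul_star_self_of_mem hB.eigenvectorUnitary.2
  have hVu' : star V * V = 1 := Unitary.star_mul_self_of_mem hB.eigenvectorUnitary.2
  have hUu' : U * star U = 1 := Unitary.mul_star_self_of_mem hA.eigenvectorUnitary.2
  have hsW : star W = star V * U := by rw [hWdef, Matrix.star_mul, star_star]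
  have hWW : W * star W = 1 := by
    rw [hWdef, hsW, Matrix.mul_assoc, ← Matrix.mul_assoc V, hVu, Matrix.one_mul, hUu]
  have hWW' : star W * W = 1 := by
    rw [hWdef, hsW, Matrix.mul_assoc, ← Matrix.mul_assoc U, hUu', Matrix.one_mul, hVu']
  refine ⟨fun i j => Complex.normSq (W i j), ?_, ?_⟩
  · refine mem_doublyStochastic_iff_sum.mpr ?_
    refine ⟨fun i j => Complex.normSq_nonneg _, fun i => ?_, fun j => ?_⟩
    · have h1 : (W * star W) i i = (1 : Matrix (Fin n) (Fin n) ℂ) i i := by rw [hWW]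
      have h2 : ∑ j, (Complex.normSq (W i j) : ℂ) = 1 := by
        simpa [Matrix.mul_apply, Matrix.star_apply, Complex.star_def,
          Complex.mul_conj, Matrix.one_apply] using h1
      exact_mod_cast congrArg Complex.re h2
    · have h1 : (star W * W) j j = (1 : Matrix (Fin n) (Fin n) ℂ) j j := by rw [hWW']
      have h2 : ∑ i, (Complex.normSq (W i j) : ℂ) = 1 := by
        simpa [Matrix.mul_apply, Matrix.star_apply, Complex.star_def, mul_comm,
          Complex.mul_conj, Matrix.one_apply] using h1
      exact_mod_cast congrArg Complex.re h2
  · have hA1 : A = U * Matrix.diagonal (fun i => (hA.eigenvalues i : ℂ)) * star U := by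
      simpa using conj_pow_eq hA 1
    have hB1 : B = V * Matrix.diagonal (fun i => (hB.eigenvalues i : ℂ)) * star V := by
      simpa using conj_pow_eq hB 1
    set α := hA.eigenvalues
    set β := hB.eigenvalues
    have key : (A * B).trace
        = (Matrix.diagonal (fun i => (α i : ℂ)) * W
            * (Matrix.diagonal (fun i => (β i : ℂ)) * star W)).trace := by
      conv_lhs => rw [hA1, hB1]
      rw [hsW, hWdef]
      simp only [Matrix.mul_assoc]
      rw [Matrix.trace_mul_comm U]
      simp only [Matrix.mul_assoc]
    have entry : ∀ i, (Matrix.diagonal (fun i => (α i : ℂ)) * W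
        * (Matrix.diagonal (fun i => (β i : ℂ)) * star W)) i i
        = ∑ j, (α i : ℂ) * (β j : ℂ) * (Complex.normSq (W i j) : ℂ) := by
      intro i
      rw [Matrix.mul_apply]
      congr 1; funext j
      rw [Matrix.diagonal_mul, Matrix.diagonal_mul, Matrix.star_apply, Complex.star_def,
        ← Complex.mul_conj]
      ring
    rw [key, Matrix.trace]
    simp_rw [Matrix.diag_apply, entry, Complex.re_sum, ← Complex.ofReal_mul, Complex.ofReal_re]

lemma hoffman_wielandt (hA : A.IsHermitian) (hB : B.IsHermitian) :
    ∃ σ : Equiv.Perm (Fin n),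
      ∑ i, (hA.eigenvalues i - hB.eigenvalues (σ i)) ^ 2 ≤
        ∑ i, ∑ j, Complex.normSq ((A - B) i j) := by
  obtain ⟨w, hwds, htr⟩ := exists_ds hA hB
  set α := hA.eigenvalues with hα
  set β := hB.eigenvalues with hβ
  obtain ⟨hw0, hwrow, hwcol⟩ := mem_doublyStochastic_iff_sum.mp hwds
  -- step 1 : ∑ normSq ((A-B) i j) = ∑ij w i j * (α i - β j)^2
  have hsub : (A - B).IsHermitian := hA.sub hB
  have hnormSq : ∑ i, ∑ j, Complex.normSq ((A - B) i j) = (((A - B) * (A - B)).trace).re := by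
    rw [Matrix.trace, Complex.re_sum]
    refine Finset.sum_congr rfl fun i _ => ?_
    rw [Matrix.diag_apply, Matrix.mul_apply, Complex.re_sum]
    refine Finset.sum_congr rfl fun j _ => ?_
    have : (A - B) j i = (starRingEnd ℂ) ((A - B) i j) := by
      rw [← hsub.apply i j, Complex.star_def, Complex.conj_conj]
    rw [this, Complex.mul_conj]
    simp
  have htrace2 : (((A - B) * (A - B)).trace).re
      = ∑ i, α i ^ 2 + ∑ i, β i ^ 2 - 2 * ∑ i, ∑ j, α i * β j * w i j := by
    have expand : (A - B) * (A - B) = A * A - A * B - (B * A - B * B) := by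
      rw [Matrix.sub_mul, Matrix.mul_sub, Matrix.mul_sub]
    rw [expand, Matrix.trace_sub, Matrix.trace_sub, Matrix.trace_sub]
    have hBA : (B * A).trace = (A * B).trace := Matrix.trace_mul_comm B A
    have hAA : ((A * A).trace).re = ∑ i, α i ^ 2 := by
      have := trace_pow_re hA 2; rwa [pow_two] at this
    have hBB : ((B * B).trace).re = ∑ i, β i ^ 2 := by
      have := trace_pow_re hB 2; rwa [pow_two] at this
    simp only [Complex.sub_re, hBA, htr, hAA, hBB]
    ring
  have hquad : ∑ i, ∑ j, w i j * (α i - β j) ^ 2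
      = ∑ i, α i ^ 2 + ∑ i, β i ^ 2 - 2 * ∑ i, ∑ j, α i * β j * w i j := by
    have e1 : ∀ i j, w i j * (α i - β j) ^ 2
        = w i j * α i ^ 2 + w i j * β j ^ 2 - 2 * (α i * β j * w i j) := by
      intro i j; ring
    simp_rw [e1, Finset.sum_sub_distrib, Finset.sum_add_distrib, ← Finset.mul_sum,
      ← Finset.sum_mul]
    have e2 : ∑ i, (∑ j, w i j) * α i ^ 2 = ∑ i, α i ^ 2 := by
      refine Finset.sum_congr rfl fun i _ => by rw [hwrow i, one_mul]
    have e3 : ∑ i, ∑ j, w i j * β j ^ 2 = ∑ j, β j ^ 2 := by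
      rw [Finset.sum_comm]
      refine Finset.sum_congr rfl fun j _ => ?_
      rw [← Finset.sum_mul, hwcol j, one_mul]
    rw [e2, e3]
  have hS : ∑ i, ∑ j, w i j * (α i - β j) ^ 2
      = ∑ i, ∑ j, Complex.normSq ((A - B) i j) :=
    hquad.trans (htrace2.symm.trans hnormSq.symm)
  obtain ⟨t, ht0, ht1, htw⟩ := exists_eq_sum_perm_of_mem_doublyStochastic hwds
  have hwexp : ∀ i j, w i j = ∑ σ : Equiv.Perm (Fin n), t σ * (σ.permMatrix ℝ) i j := by
    intro i j
    have h := congrFun (congrFun htw i) j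
    simpa [Matrix.sum_apply, Matrix.smul_apply, smul_eq_mul] using h.symm
  have hperm_sum : ∀ σ : Equiv.Perm (Fin n),
      ∑ i, ∑ j, (σ.permMatrix ℝ) i j * (α i - β j) ^ 2 = ∑ i, (α i - β (σ i)) ^ 2 := by
    intro σ
    refine Finset.sum_congr rfl fun i _ => ?_
    simp [Equiv.Perm.permMatrix, PEquiv.toMatrix_apply, Equiv.toPEquiv_apply, ite_mul,
      Finset.sum_ite_eq, Finset.sum_ite_eq']
  have hody : ∑ i, ∑ j, w i j * (α i - β j) ^ 2
      = ∑ σ : Equiv.Perm (Fin n), t σ * ∑ i, (α i - β (σ i)) ^ 2 := by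
    have swap1 : ∀ i : Fin n, ∑ j, ∑ σ : Equiv.Perm (Fin n),
        t σ * (σ.permMatrix ℝ) i j * (α i - β j) ^ 2
        = ∑ σ : Equiv.Perm (Fin n), ∑ j, t σ * (σ.permMatrix ℝ) i j * (α i - β j) ^ 2 :=
      fun i => Finset.sum_comm
    simp_rw [hwexp, Finset.sum_mul]
    rw [Finset.sum_congr rfl fun i _ => swap1 i, Finset.sum_comm]
    refine Finset.sum_congr rfl fun σ _ => ?_
    rw [← hperm_sum σ]
    simp_rw [mul_assoc, ← Finset.mul_sum]
  set S := ∑ i, ∑ j, w i j * (α i - β j) ^ 2 with hSdef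
  by_contra hcon
  push_neg at hcon
  have hcon' : ∀ σ : Equiv.Perm (Fin n), S < ∑ i, (α i - β (σ i)) ^ 2 := by
    intro σ
    have := hcon σ
    rw [← hS] at this
    exact lt_of_le_of_lt (le_of_eq rfl) (lt_of_not_ge fun hle => absurd hle (not_le.mpr this))
  obtain ⟨σ₀, _, hσ₀⟩ := Finset.exists_ne_zero_of_sum_ne_zero (by rw [ht1]; exact one_ne_zero)
  have hσ₀pos : 0 < t σ₀ := lt_of_le_of_ne (ht0 σ₀) (Ne.symm hσ₀)
  have hlt : ∑ σ : Equiv.Perm (Fin n), t σ * S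
      < ∑ σ : Equiv.Perm (Fin n), t σ * ∑ i, (α i - β (σ i)) ^ 2 :=
    Finset.sum_lt_sum
      (fun σ _ => mul_le_mul_of_nonneg_left (hcon' σ).le (ht0 σ))
      ⟨σ₀, Finset.mem_univ _, mul_lt_mul_of_pos_left (hcon' σ₀) hσ₀pos⟩
  rw [← Finset.sum_mul, ht1, one_mul, ← hody] at hlt
  exact lt_irrefl S hlt

lemma ball_eig {d : ℕ} {a : ℝ} (hd : 2 ≤ d) (h : A ∈ schattenBall n d a) :
    ∑ i, |h.1.eigenvalues i| ^ (2 * (d - 1)) ≤ a ^ (2 * (d - 1)) := by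
  have hA := h.1
  have h2 := h.2
  have heq : (Aᴴ * A) ^ (d - 1) = A ^ (2 * (d - 1)) := by
    rw [hA.eq, ← pow_two, ← pow_mul]
  rw [heq, trace_pow_re hA] at h2
  refine le_of_eq_of_le ?_ h2.le
  refine Finset.sum_congr rfl fun i _ => ?_
  exact (even_two_mul _).pow_abs _

lemma dist_eq_sqrt_normSq (A B : Matrix (Fin n) (Fin n) ℂ) :
    dist A B = Real.sqrt (∑ i, ∑ j, Complex.normSq ((A - B) i j)) := by
  rw [dist_eq_norm, Matrix.frobenius_norm_def, Real.sqrt_eq_rpow]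
  congr 1
  refine Finset.sum_congr rfl fun i _ => Finset.sum_congr rfl fun j _ => ?_
  rw [Real.rpow_two, Complex.sq_norm]

lemma key_bound {d : ℕ} {a : ℝ} (hd : 2 ≤ d) (ha : 0 < a) (φ : ℝ → ℝ)
    (hφ : ∀ s t : ℝ, |φ s - φ t| ≤
      (∑ k ∈ Finset.range d, |s| ^ k * |t| ^ (d - 1 - k)) * |s - t|)
    (hA : A ∈ schattenBall n d a) (hB : B ∈ schattenBall n d a) :
    |(∑ i, φ (hA.1.eigenvalues i)) - ∑ i, φ (hB.1.eigenvalues i)| ≤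
      d * a ^ (d - 1) * dist A B := by
  obtain ⟨σ, hσ⟩ := hoffman_wielandt hA.1 hB.1
  have hcomp : ∑ i, φ (hB.1.eigenvalues i) = ∑ i, φ (hB.1.eigenvalues (σ i)) :=
    (Equiv.sum_comp σ (fun i => φ (hB.1.eigenvalues i))).symm
  rw [hcomp]
  have hy : ∑ i, |hB.1.eigenvalues (σ i)| ^ (2 * (d - 1)) ≤ a ^ (2 * (d - 1)) := by
    rw [Equiv.sum_comp σ (fun i => |hB.1.eigenvalues i| ^ (2 * (d - 1)))]
    exact ball_eig hd hB
  refine (master d hd a ha φ hφ _ _ (ball_eig hd hA) hy).trans ?_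
  rw [dist_eq_sqrt_normSq]
  exact mul_le_mul_of_nonneg_left (Real.sqrt_le_sqrt hσ) (by positivity)

end Aux

theorem trace_pow_locally_lipschitz (n d : ℕ) (hd : 2 ≤ d) (a : ℝ) (ha : 0 < a) :
    (Even d →
      LipschitzOnWith (Real.toNNReal (d * a ^ (d - 1)))
        (fun A : Matrix (Fin n) (Fin n) ℂ => ((A ^ d).trace).re)
        (schattenBall n d a)) ∧
    (Odd d →
      LipschitzOnWith (Real.toNNReal (d * a ^ (d - 1)))
        (fun A : Matrix (Fin n) (Fin n) ℂ =>
          if h : A.IsHermitian then ∑ i, (max 0 (h.eigenvalues i)) ^ d else 0)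
        (schattenBall n d a) ∧
      LipschitzOnWith (Real.toNNReal (d * a ^ (d - 1)))
        (fun A : Matrix (Fin n) (Fin n) ℂ =>
          if h : A.IsHermitian then ∑ i, (max 0 (-(h.eigenvalues i))) ^ d else 0)
        (schattenBall n d a)) := by
  have hK : ((Real.toNNReal (d * a ^ (d - 1))) : ℝ) = d * a ^ (d - 1) :=
    Real.coe_toNNReal _ (by positivity)
  have hmaxneg : ∀ s t : ℝ, |(max 0 (-s)) ^ d - (max 0 (-t)) ^ d| ≤
      (∑ k ∈ Finset.range d, |s| ^ k * |t| ^ (d - 1 - k)) * |s - t| := by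
    intro s t
    have := max_pow_bound d (-s) (-t)
    rw [show -s - -t = -(s - t) by ring, abs_neg] at this
    simp only [abs_neg] at this
    exact this
  refine ⟨fun _ => ?_, fun _ => ⟨?_, ?_⟩⟩
  · refine LipschitzOnWith.of_dist_le_mul fun A hA B hB => ?_
    rw [hK, Real.dist_eq]
    have eA : ((A ^ d).trace).re = ∑ i, hA.1.eigenvalues i ^ d := trace_pow_re hA.1 d
    have eB : ((B ^ d).trace).re = ∑ i, hB.1.eigenvalues i ^ d := trace_pow_re hB.1 d
    simp only [eA, eB]
    exact key_bound hd ha (fun s => s ^ d) (pow_sub_pow_abs d) hA hB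
  · refine LipschitzOnWith.of_dist_le_mul fun A hA B hB => ?_
    rw [hK, Real.dist_eq]
    simp only [dif_pos hA.1, dif_pos hB.1]
    exact key_bound hd ha (fun s => (max 0 s) ^ d) (max_pow_bound d) hA hB
  · refine LipschitzOnWith.of_dist_le_mul fun A hA B hB => ?_
    rw [hK, Real.dist_eq]
    simp only [dif_pos hA.1, dif_pos hB.1]
    exact key_bound hd ha (fun s => (max 0 (-s)) ^ d) hmaxneg hA hB
end
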